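/- arXiv:0812.2978 — 6 statements merged into one kernel-verified Lean document; each statement's English description precedes it below -/
import Mathlib

section
/- For each 0 ≤ m ≤ n, the number of lattice paths from (0,0) to (n+1,1) with steps (1,1), (1,-1), (1,0), classified by the position of the rightmost minimum, such that the number of steps weakly to the left of the rightmost minimum point equals m, is the n-th Motzkin number m_n (in particular it is independent of m). -/
/-- The `n`-th Motzkin number: the number of lattice paths from `(0,0)` to `(n,0)`
with steps `(1,1)`, `(1,-1)`, `(1,0)` never going below the x-axis. -/
noncomputable def motzkin (n : ℕ) : ℕ :=
  Nat.card {L : List (ℤ × ℤ) //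
    L.length = n ∧
    (∀ s ∈ L, s = ((1 : ℤ), (1 : ℤ)) ∨ s = ((1 : ℤ), (-1 : ℤ)) ∨ s = ((1 : ℤ), (0 : ℤ))) ∧
    (L.map Prod.snd).sum = 0 ∧
    (∀ h ∈ (L.map Prod.snd).scanl (· + ·) 0, 0 ≤ h)}

/-- The list of heights of the points of a path (starting with the initial height 0). -/
def pts (L : List (ℤ × ℤ)) : List ℤ := (L.map Prod.snd).scanl (· + ·) 0

/-- The point with index `i` is the rightmost minimum point of the path `L`. -/
def IsRightmostMin (L : List (ℤ × ℤ)) (i : ℕ) : Prop :=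
  i < (pts L).length ∧ (∀ x ∈ pts L, (pts L).getD i 0 ≤ x) ∧
    ∀ k, i < k → k < (pts L).length → (pts L).getD i 0 < (pts L).getD k 0

private lemma scanl_add_eq (s : List ℤ) (a : ℤ) :
    s.scanl (· + ·) a = (List.range (s.length + 1)).map (fun i => a + (s.take i).sum) := by
  induction s generalizing a with
  | nil => simp
  | cons x t ih =>
    rw [List.scanl_cons, ih]
    conv_rhs => rw [show (x::t).length + 1 = (t.length+1)+1 from by simp, List.range_succ_eq_map]
    simp only [List.map_cons, List.map_map, List.take_zero, List.sum_nil, add_zero,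
      Function.comp, List.singleton_append]
    congr 1
    apply List.map_congr_left
    intro i _
    simp [List.take_succ_cons]
    ring

private lemma length_pts (s : List ℤ) : (s.scanl (· + ·) (0:ℤ)).length = s.length + 1 := by
  rw [scanl_add_eq]; simp

private lemma getD_pts {s : List ℤ} {i : ℕ} (h : i ≤ s.length) :
    (s.scanl (· + ·) (0:ℤ)).getD i 0 = (s.take i).sum := by
  rw [scanl_add_eq]
  rw [List.getD_eq_getElem _ _ (by simpa using Nat.lt_succ_of_le h)]
  simp

private lemma mem_pts {s : List ℤ} {x : ℤ} :
    x ∈ s.scanl (· + ·) (0:ℤ) ↔ ∃ i ≤ s.length, (s.take i).sum = x := by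
  rw [scanl_add_eq]
  simp [Nat.lt_succ_iff, eq_comm]

private lemma drop_take_sum (s : List ℤ) (k i : ℕ) :
    ((s.drop k).take i).sum = (s.take (k + i)).sum - (s.take k).sum := by
  rw [List.take_add, List.sum_append]; ring

private lemma step_at (n m : ℕ) (hm : m ≤ n) (L : List (ℤ × ℤ))
    (h1 : L.length = n + 1)
    (h2 : ∀ s ∈ L, s = ((1:ℤ),(1:ℤ)) ∨ s = ((1:ℤ),(-1:ℤ)) ∨ s = ((1:ℤ),(0:ℤ)))
    (h4 : IsRightmostMin L m) :
    L[m]'(by omega) = ((1:ℤ),(1:ℤ)) := by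
  have hmlt : m < L.length := by omega
  have hms : (L.map Prod.snd).length = n + 1 := by simp [h1]
  obtain ⟨-, -, hstrict⟩ := h4
  have hk := hstrict (m+1) (by omega) (by rw [pts, length_pts]; omega)
  rw [pts, getD_pts (by omega), getD_pts (by omega)] at hk
  rw [List.take_succ, List.sum_append,
    List.getElem?_eq_getElem (show m < (L.map Prod.snd).length by omega)] at hk
  rw [List.getElem_map] at hk
  simp only [Option.toList_some, List.sum_cons, List.sum_nil, add_zero] at hk
  rcases h2 _ (List.getElem_mem hmlt) with h | h | h
  · exact h
  · rw [h] at hk; norm_num at hk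
  · rw [h] at hk; norm_num at hk

private lemma fwd_mem (n m : ℕ) (hm : m ≤ n) (L : List (ℤ × ℤ))
    (h1 : L.length = n + 1)
    (h2 : ∀ s ∈ L, s = ((1:ℤ),(1:ℤ)) ∨ s = ((1:ℤ),(-1:ℤ)) ∨ s = ((1:ℤ),(0:ℤ)))
    (h3 : (L.map Prod.snd).sum = 1)
    (h4 : IsRightmostMin L m) :
    (L.drop (m+1) ++ L.take m).length = n ∧
    (∀ s ∈ L.drop (m+1) ++ L.take m,
      s = ((1:ℤ),(1:ℤ)) ∨ s = ((1:ℤ),(-1:ℤ)) ∨ s = ((1:ℤ),(0:ℤ))) ∧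
    ((L.drop (m+1) ++ L.take m).map Prod.snd).sum = 0 ∧
    (∀ h ∈ ((L.drop (m+1) ++ L.take m).map Prod.snd).scanl (· + ·) 0, 0 ≤ h) := by
  have hstepL := step_at n m hm L h1 h2 h4
  set s := L.map Prod.snd with hsdef
  have hs : s.length = n + 1 := by simp [hsdef, h1]
  obtain ⟨-, hmin, hstrict⟩ := h4
  rw [pts, ← hsdef] at hmin hstrict
  have hms : m ≤ s.length := by omega
  have hmin' : ∀ i ≤ n + 1, (s.take m).sum ≤ (s.take i).sum := by
    intro i hi
    have := hmin _ (mem_pts.mpr ⟨i, by omega, rfl⟩)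
    rwa [getD_pts hms] at this
  have hstrict' : ∀ k, m < k → k ≤ n + 1 → (s.take m).sum < (s.take k).sum := by
    intro k hk1 hk2
    have := hstrict k hk1 (by rw [length_pts]; omega)
    rwa [getD_pts hms, getD_pts (by omega)] at this
  have hstep' : s[m]'(by omega) = 1 := by
    simp [hsdef, hstepL]
  have htsucc : (s.take (m+1)).sum = (s.take m).sum + 1 := by
    rw [List.take_succ, List.sum_append,
      List.getElem?_eq_getElem (show m < s.length by omega)]
    simp [hstep']
  have hsum_split : (s.take (m+1)).sum + (s.drop (m+1)).sum = 1 := by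
    rw [← List.sum_append, List.take_append_drop, h3]
  have hdropsum : (s.drop (m+1)).sum = -(s.take m).sum := by linarith
  have hmap : (L.drop (m+1) ++ L.take m).map Prod.snd = s.drop (m+1) ++ s.take m := by
    rw [List.map_append, List.map_drop, List.map_take]
  have hdl : (s.drop (m+1)).length = n - m := by rw [List.length_drop, hs]; omega
  refine ⟨?_, ?_, ?_, ?_⟩
  · rw [List.length_append, List.length_drop, List.length_take, h1]; omega
  · intro p hp
    rcases List.mem_append.mp hp with h | h
    · exact h2 p (List.mem_of_mem_drop h)
    · exact h2 p (List.mem_of_mem_take h)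
  · rw [hmap, List.sum_append, hdropsum]; ring
  · intro h hmem
    rw [hmap, mem_pts] at hmem
    obtain ⟨i, hi, hval⟩ := hmem
    rw [List.length_append, hdl, List.length_take, hs] at hi
    rw [List.take_append, List.sum_append, drop_take_sum, hdl,
      List.take_take] at hval
    by_cases hcase : i ≤ n - m
    · have h0 : i - (n - m) = 0 := by omega
      rw [h0] at hval
      simp only [Nat.zero_min, List.take_zero, List.sum_nil, add_zero] at hval
      have := hstrict' (m+1+i) (by omega) (by omega)
      rw [htsucc] at hval
      linarith
    · have hbig : s.take (m+1+i) = s := List.take_of_length_le (by omega)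
      rw [hbig, h3, htsucc] at hval
      have := hmin' (min (i - (n-m)) m) (by omega)
      linarith

private lemma bwd_mem (n m : ℕ) (hm : m ≤ n) (M : List (ℤ × ℤ))
    (h1 : M.length = n)
    (h2 : ∀ s ∈ M, s = ((1:ℤ),(1:ℤ)) ∨ s = ((1:ℤ),(-1:ℤ)) ∨ s = ((1:ℤ),(0:ℤ)))
    (h3 : (M.map Prod.snd).sum = 0)
    (h4 : ∀ h ∈ (M.map Prod.snd).scanl (· + ·) 0, 0 ≤ h) :
    (M.drop (n-m) ++ (((1:ℤ),(1:ℤ)) :: M.take (n-m))).length = n + 1 ∧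
    (∀ s ∈ M.drop (n-m) ++ (((1:ℤ),(1:ℤ)) :: M.take (n-m)),
      s = ((1:ℤ),(1:ℤ)) ∨ s = ((1:ℤ),(-1:ℤ)) ∨ s = ((1:ℤ),(0:ℤ))) ∧
    ((M.drop (n-m) ++ (((1:ℤ),(1:ℤ)) :: M.take (n-m))).map Prod.snd).sum = 1 ∧
    IsRightmostMin (M.drop (n-m) ++ (((1:ℤ),(1:ℤ)) :: M.take (n-m))) m := by
  set t := M.map Prod.snd with htdef
  have ht : t.length = n := by simp [htdef, h1]
  have hc : ∀ i ≤ n, 0 ≤ (t.take i).sum := fun i hi => h4 _ (mem_pts.mpr ⟨i, by omega, rfl⟩)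
  have hsplit : (t.take (n-m)).sum + (t.drop (n-m)).sum = 0 := by
    rw [← List.sum_append, List.take_append_drop, h3]
  have hmap : (M.drop (n-m) ++ (((1:ℤ),(1:ℤ)) :: M.take (n-m))).map Prod.snd
      = t.drop (n-m) ++ ((1:ℤ) :: t.take (n-m)) := by
    rw [List.map_append, List.map_drop, List.map_cons, List.map_take]
  have hAl : (t.drop (n-m)).length = m := by rw [List.length_drop, ht]; omega
  have hval : ∀ i, ((t.drop (n-m) ++ ((1:ℤ) :: t.take (n-m))).take i).sum
      = (t.take (n-m+i)).sum - (t.take (n-m)).sum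
        + (((1:ℤ) :: t.take (n-m)).take (i-m)).sum := by
    intro i
    rw [List.take_append, List.sum_append, drop_take_sum, hAl]
  have htfull : (t.take n).sum = 0 := by
    rw [List.take_of_length_le (le_of_eq ht), h3]
  have hvm : ((t.drop (n-m) ++ ((1:ℤ) :: t.take (n-m))).take m).sum
      = -(t.take (n-m)).sum := by
    rw [hval, show n - m + m = n from by omega, Nat.sub_self, List.take_zero,
      List.sum_nil, htfull]
    ring
  have hgen : ∀ i, m < i → i ≤ n + 1 →
      -(t.take (n-m)).sum + 1 ≤ ((t.drop (n-m) ++ ((1:ℤ) :: t.take (n-m))).take i).sum := by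
    intro i hi1 hi2
    rw [hval]
    obtain ⟨j, hj⟩ : ∃ j, i - m = j + 1 := ⟨i - m - 1, by omega⟩
    rw [hj, List.take_succ_cons, List.sum_cons, List.take_take]
    have h5 : t.take (n-m+i) = t := List.take_of_length_le (by omega)
    rw [h5, h3]
    have := hc (min j (n-m)) (by omega)
    linarith
  have hge : ∀ i ≤ n + 1,
      -(t.take (n-m)).sum ≤ ((t.drop (n-m) ++ ((1:ℤ) :: t.take (n-m))).take i).sum := by
    intro i hi
    by_cases hcase : i ≤ m
    · rw [hval]
      have h0 : i - m = 0 := by omega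
      rw [h0, List.take_zero, List.sum_nil]
      have := hc (n-m+i) (by omega)
      linarith
    · have := hgen i (by omega) hi
      linarith
  have hulen : (t.drop (n-m) ++ ((1:ℤ) :: t.take (n-m))).length = n + 1 := by
    rw [List.length_append, hAl, List.length_cons, List.length_take, ht]; omega
  refine ⟨?_, ?_, ?_, ?_, ?_, ?_⟩
  · rw [List.length_append, List.length_drop, List.length_cons, List.length_take, h1]; omega
  · intro p hp
    rcases List.mem_append.mp hp with h | h
    · exact h2 p (List.mem_of_mem_drop h)
    · rcases List.mem_cons.mp h with h | h
      · exact Or.inl h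
      · exact h2 p (List.mem_of_mem_take h)
  · rw [hmap, List.sum_append, List.sum_cons]; linarith
  · rw [pts, hmap, length_pts, hulen]; omega
  · intro x hx
    rw [pts, hmap] at hx
    rw [pts, hmap, getD_pts (by rw [hulen]; omega), hvm]
    rw [mem_pts] at hx
    obtain ⟨i, hi, rfl⟩ := hx
    rw [hulen] at hi
    exact hge i hi
  · intro k hk1 hk2
    rw [pts, hmap, length_pts, hulen] at hk2
    rw [pts, hmap, getD_pts (by rw [hulen]; omega), getD_pts (by rw [hulen]; omega), hvm]
    have := hgen k hk1 (by omega)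
    linarith

private lemma gf_id (n m : ℕ) (hm : m ≤ n) (L : List (ℤ × ℤ)) (h1 : L.length = n + 1)
    (hstep : L[m]'(by omega) = ((1:ℤ),(1:ℤ))) :
    (L.drop (m+1) ++ L.take m).drop (n-m)
      ++ (((1:ℤ),(1:ℤ)) :: (L.drop (m+1) ++ L.take m).take (n-m)) = L := by
  have hd : (L.drop (m+1)).length = n - m := by rw [List.length_drop, h1]; omega
  rw [List.drop_left' hd, List.take_left' hd, ← hstep,
    ← List.drop_eq_getElem_cons (by omega), List.take_append_drop]

private lemma fg_id (n m : ℕ) (hm : m ≤ n) (M : List (ℤ × ℤ)) (h1 : M.length = n) :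
    (M.drop (n-m) ++ (((1:ℤ),(1:ℤ)) :: M.take (n-m))).drop (m+1)
      ++ (M.drop (n-m) ++ (((1:ℤ),(1:ℤ)) :: M.take (n-m))).take m = M := by
  have hd : (M.drop (n-m)).length = m := by rw [List.length_drop, h1]; omega
  have h2 : (M.drop (n-m) ++ (((1:ℤ),(1:ℤ)) :: M.take (n-m))).drop (m+1) = M.take (n-m) := by
    rw [List.drop_append, List.drop_eq_nil_of_le (by rw [hd]; omega), hd,
      List.nil_append, show m + 1 - m = 1 from by omega, List.drop_one, List.tail_cons]
  rw [h2, List.take_left' hd, List.take_append_drop]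

/-- Shapiro's Chung-Feller theorem for Motzkin paths: for `0 ≤ m ≤ n`, the number of
paths of `n+1` steps from `{(1,1),(1,-1),(1,0)}` starting at `(0,0)`, ending on the
line `y = 1`, whose rightmost minimum point is preceded by exactly `m` steps
(i.e. the rightmost minimum point has index `m`), equals the `n`-th Motzkin number. -/
theorem chung_feller_motzkin_type (n m : ℕ) (hm : m ≤ n) :
    Nat.card {L : List (ℤ × ℤ) //
      L.length = n + 1 ∧
      (∀ s ∈ L, s = ((1 : ℤ), (1 : ℤ)) ∨ s = ((1 : ℤ), (-1 : ℤ)) ∨ s = ((1 : ℤ), (0 : ℤ))) ∧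
      (L.map Prod.snd).sum = 1 ∧
      IsRightmostMin L m} = motzkin n := by
  rw [motzkin]
  apply Nat.card_congr
  refine ⟨fun L => ⟨L.1.drop (m+1) ++ L.1.take m,
      fwd_mem n m hm L.1 L.2.1 L.2.2.1 L.2.2.2.1 L.2.2.2.2⟩,
    fun M => ⟨M.1.drop (n-m) ++ (((1:ℤ),(1:ℤ)) :: M.1.take (n-m)),
      bwd_mem n m hm M.1 M.2.1 M.2.2.1 M.2.2.2.1 M.2.2.2.2⟩,
    fun L => Subtype.ext (gf_id n m hm L.1 L.2.1
      (step_at n m hm L.1 L.2.1 L.2.2.1 L.2.2.2.2)),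
    fun M => Subtype.ext (fg_id n m hm M.1 M.2.1)⟩
end

section
/- For each 0 ≤ m ≤ n, the number of lattice paths of n+1 steps from the set {(1,1),(1,-1),(1,0)} starting at (0,0) and ending on the line y=1 whose number of steps with ending height ≤ 0 equals m, is the n-th Motzkin number m_n. -/
namespace CFAux

open List

/-- partial sums -/
def S (l : List ℤ) (j : ℕ) : ℤ := (l.take j).sum

lemma S_zero (l : List ℤ) : S l 0 = 0 := rfl

lemma S_cons (a : ℤ) (l : List ℤ) (j : ℕ) : S (a :: l) (j + 1) = a + S l j := by
  simp [S, List.take_succ_cons]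

lemma S_length (l : List ℤ) : S l l.length = l.sum := by simp [S]

lemma scanl_eq_map (l : List ℤ) : ∀ c : ℤ,
    l.scanl (· + ·) c = (List.range (l.length + 1)).map (fun j => c + S l j) := by
  induction l with
  | nil => intro c; simp [S]
  | cons a t ih =>
    intro c
    rw [List.scanl_cons, ih (c + a)]
    have hlen : (a :: t).length + 1 = (t.length + 1) + 1 := by simp
    rw [hlen]
    conv_rhs => rw [List.range_succ_eq_map]
    rw [List.map_cons, List.map_map]
    congr 1
    · simp [S_zero]
    · apply List.map_congr_left
      intro j _
      simp only [Function.comp_apply, Nat.succ_eq_add_one, S_cons]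
      ring

/-- the statistic, in Finset form -/
def statF (l : List ℤ) : ℕ :=
  ((Finset.range l.length).filter (fun j => S l (j + 1) ≤ 0)).card

lemma countP_range (n : ℕ) (p : ℕ → Prop) [DecidablePred p] :
    (List.range n).countP (fun j => decide (p j)) = ((Finset.range n).filter p).card := by
  classical
  rw [List.countP_eq_length_filter]
  rfl

/-- the statistic as in the theorem statement -/
def cstat (L : List (ℤ × ℤ)) : ℕ :=
  ((L.zip (((L.map Prod.snd).scanl (· + ·) 0).tail)).countP (fun p => decide (p.2 ≤ 0)))

lemma cstat_eq (L : List (ℤ × ℤ)) : cstat L = statF (L.map Prod.snd) := by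
  classical
  set l := L.map Prod.snd with hl
  have hlen : ((l.scanl (· + ·) 0).tail).length = L.length := by
    simp [List.length_scanl, hl]
  unfold cstat
  rw [show (fun p : (ℤ × ℤ) × ℤ => decide (p.2 ≤ 0))
      = (fun h : ℤ => decide (h ≤ 0)) ∘ Prod.snd from rfl]
  rw [← List.countP_map, List.map_snd_zip (le_of_eq hlen)]
  rw [scanl_eq_map l 0]
  rw [List.range_succ_eq_map, List.map_cons, List.tail_cons, List.map_map]
  rw [List.countP_map]
  have : ((fun h : ℤ => decide (h ≤ 0)) ∘ (fun j => 0 + S l j) ∘ Nat.succ)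
      = fun j => decide (S l (j + 1) ≤ 0) := by
    funext j; simp [Function.comp]
  rw [this, countP_range l.length (fun j => S l (j + 1) ≤ 0)]
  unfold statF
  congr 1

lemma sum_drop (l : List ℤ) (i : ℕ) : (l.drop i).sum = l.sum - S l i := by
  have h := congrArg List.sum (List.take_append_drop i l)
  rw [List.sum_append] at h
  unfold S
  omega

lemma S_rotate (l : List ℤ) {i j : ℕ} (hi : i ≤ l.length) (hj : j ≤ l.length) :
    S (l.rotate i) j =
      if j ≤ l.length - i then S l (i + j) - S l i
      else l.sum - S l i + S l (j - (l.length - i)) := by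
  rw [List.rotate_eq_drop_append_take hi]
  split_ifs with h
  · rw [S, List.take_append_of_le_length (by simpa using h)]
    have h2 := congrArg List.sum (List.take_add (l := l) (i := i) (j := j))
    rw [List.sum_append] at h2
    unfold S at *
    omega
  · rw [S, List.take_append]
    rw [List.length_drop]
    rw [List.take_of_length_le (by simp; omega)]
    rw [List.sum_append, sum_drop]
    rw [List.take_take]
    have : min (j - (l.length - i)) i = j - (l.length - i) := by omega
    rw [this]
    rfl

/-- `Q l i k` : position `k` precedes `i` in the lexicographic order on `(S, -index)`. -/
def Q (l : List ℤ) (i k : ℕ) : Prop := S l k < S l i ∨ (S l k = S l i ∧ i < k)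

instance (l : List ℤ) (i : ℕ) : DecidablePred (Q l i) := fun k => by
  unfold Q; infer_instance

lemma key (l : List ℤ) (hsum : l.sum = 1) {i j : ℕ} (hi : i < l.length)
    (hj : j < l.length) :
    (S (l.rotate i) (j + 1) ≤ 0) ↔ Q l i ((i + j + 1) % l.length) := by
  have hrot := S_rotate l (le_of_lt hi) (j := j + 1) (by omega)
  rcases le_or_gt (j + 1) (l.length - i) with hc | hc
  · rw [if_pos hc] at hrot
    have hij : i + (j + 1) ≤ l.length := by omega
    rcases eq_or_lt_of_le hij with heq | hlt
    · -- i + j + 1 = l.length, wraps to 0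
      have hmod : (i + j + 1) % l.length = 0 := by
        rw [show i + j + 1 = l.length from by omega]
        exact Nat.mod_self _
      rw [hmod, hrot]
      have hS : S l (i + (j + 1)) = 1 := by
        rw [show i + (j + 1) = l.length from by omega, S_length, hsum]
      rw [hS]
      unfold Q
      rw [S_zero]
      constructor
      · intro h; left; omega
      · rintro (h | ⟨_, h⟩) <;> omega
    · have hmod : (i + j + 1) % l.length = i + j + 1 := Nat.mod_eq_of_lt (by omega)
      rw [hmod, hrot]
      unfold Q
      have e : i + (j + 1) = i + j + 1 := by omega
      rw [e] at hrot ⊢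
      constructor
      · intro h
        rcases lt_or_eq_of_le (show S l (i + j + 1) ≤ S l i from by omega) with h' | h'
        · exact Or.inl h'
        · exact Or.inr ⟨h', by omega⟩
      · rintro (h | ⟨h, _⟩) <;> omega
  · rw [if_neg (by omega)] at hrot
    have hk : j + 1 - (l.length - i) = i + j + 1 - l.length := by omega
    rw [hk] at hrot
    have hmod : (i + j + 1) % l.length = i + j + 1 - l.length := by
      have h1 : i + j + 1 - l.length < l.length := by omega
      have h2 : i + j + 1 = (i + j + 1 - l.length) + l.length := by omega
      conv_lhs => rw [h2]
      rw [Nat.add_mod_right, Nat.mod_eq_of_lt h1]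
    rw [hmod, hrot, hsum]
    unfold Q
    have hkle : i + j + 1 - l.length ≤ i := by omega
    constructor
    · intro h; left; omega
    · rintro (h | ⟨_, hik⟩)
      · omega
      · exfalso; omega

lemma statF_rotate (l : List ℤ) (hsum : l.sum = 1) {i : ℕ} (hi : i < l.length) :
    statF (l.rotate i) = ((Finset.range l.length).filter (Q l i)).card := by
  classical
  set N := l.length with hN
  have hlen : (l.rotate i).length = N := by simp [List.length_rotate, hN]
  unfold statF
  rw [hlen]
  apply Finset.card_bij (fun j _ => (i + j + 1) % N)
  · intro j hj
    rw [Finset.mem_filter, Finset.mem_range] at hj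
    rw [Finset.mem_filter, Finset.mem_range]
    refine ⟨Nat.mod_lt _ (by omega), ?_⟩
    exact (key l hsum hi hj.1).mp hj.2
  · intro j hj j' hj' heq
    rw [Finset.mem_filter, Finset.mem_range] at hj hj'
    have h1 : (i + 1) + j ≡ (i + 1) + j' [MOD N] := by
      show ((i + 1) + j) % N = ((i + 1) + j') % N
      rw [show (i + 1) + j = i + j + 1 from by omega, show (i + 1) + j' = i + j' + 1 from by omega]
      exact heq
    have h2 : j ≡ j' [MOD N] := Nat.ModEq.add_left_cancel' (i + 1) h1
    exact Nat.ModEq.eq_of_lt_of_lt h2 hj.1 hj'.1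
  · intro k hk
    rw [Finset.mem_filter, Finset.mem_range] at hk
    rcases lt_or_ge i k with h | h
    · refine ⟨k - i - 1, ?_, ?_⟩
      · rw [Finset.mem_filter, Finset.mem_range]
        have hjN : k - i - 1 < N := by omega
        have hm : (i + (k - i - 1) + 1) % N = k := by
          rw [show i + (k - i - 1) + 1 = k from by omega, Nat.mod_eq_of_lt hk.1]
        refine ⟨hjN, ?_⟩
        rw [key l hsum hi hjN, hm]
        exact hk.2
      · rw [show i + (k - i - 1) + 1 = k from by omega, Nat.mod_eq_of_lt hk.1]
    · refine ⟨k + N - i - 1, ?_, ?_⟩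
      · rw [Finset.mem_filter, Finset.mem_range]
        have hjN : k + N - i - 1 < N := by omega
        have hm : (i + (k + N - i - 1) + 1) % N = k := by
          rw [show i + (k + N - i - 1) + 1 = k + N from by omega, Nat.add_mod_right,
            Nat.mod_eq_of_lt hk.1]
        refine ⟨hjN, ?_⟩
        rw [key l hsum hi hjN, hm]
        exact hk.2
      · rw [show i + (k + N - i - 1) + 1 = k + N from by omega, Nat.add_mod_right,
          Nat.mod_eq_of_lt hk.1]

lemma rank_lt (l : List ℤ) {i : ℕ} (hi : i < l.length) :
    ((Finset.range l.length).filter (Q l i)).card < l.length := by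
  classical
  have hsub : (Finset.range l.length).filter (Q l i) ⊆ (Finset.range l.length).erase i := by
    intro k hk
    rw [Finset.mem_filter] at hk
    rw [Finset.mem_erase]
    refine ⟨?_, hk.1⟩
    rintro rfl
    rcases hk.2 with h | ⟨_, h⟩ <;> omega
  calc ((Finset.range l.length).filter (Q l i)).card
      ≤ ((Finset.range l.length).erase i).card := Finset.card_le_card hsub
    _ < l.length := by
        rw [Finset.card_erase_of_mem (Finset.mem_range.mpr hi), Finset.card_range]
        omega

lemma rank_inj (l : List ℤ) {i i' : ℕ} (hi : i < l.length) (hi' : i' < l.length)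
    (h : ((Finset.range l.length).filter (Q l i)).card
       = ((Finset.range l.length).filter (Q l i')).card) : i = i' := by
  classical
  by_contra hne
  -- trichotomy: Q l i' i ∨ Q l i i'
  have htri : Q l i' i ∨ Q l i i' := by
    unfold Q
    rcases lt_trichotomy (S l i) (S l i') with hS | hS | hS
    · left; left; exact hS
    · rcases Nat.lt_or_ge i i' with hii | hii
      · right; right; exact ⟨hS.symm, hii⟩
      · left; right; exact ⟨hS, by omega⟩
    · right; left; exact hS
  have main : ∀ a b : ℕ, a < l.length → b < l.length → Q l b a →
      ((Finset.range l.length).filter (Q l a)).card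
        < ((Finset.range l.length).filter (Q l b)).card := by
    intro a b ha hb hab
    apply Finset.card_lt_card
    rw [Finset.ssubset_iff_of_subset]
    · exact ⟨a, by
        rw [Finset.mem_filter]
        refine ⟨⟨Finset.mem_range.mpr ha, hab⟩, ?_⟩
        intro hmem
        rw [Finset.mem_filter] at hmem
        rcases hmem.2 with h1 | ⟨_, h1⟩ <;> omega⟩
    · intro k hk
      rw [Finset.mem_filter] at hk ⊢
      refine ⟨hk.1, ?_⟩
      rcases hk.2 with h1 | ⟨h1, h1'⟩ <;> rcases hab with h2 | ⟨h2, h2'⟩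
      · left; omega
      · left; omega
      · left; omega
      · right; exact ⟨by omega, by omega⟩
  rcases htri with h1 | h1
  · have := main i i' hi hi' h1; omega
  · have := main i' i hi' hi h1; omega

lemma exists_unique_rot (l : List ℤ) (hne : l ≠ []) (hsum : l.sum = 1) {m : ℕ}
    (hm : m < l.length) : ∃! i, i < l.length ∧ statF (l.rotate i) = m := by
  classical
  have hN : 0 < l.length := List.length_pos_iff.mpr hne
  set f : Fin l.length → Fin l.length := fun i =>
    ⟨statF (l.rotate i.1), by rw [statF_rotate l hsum i.2]; exact rank_lt l i.2⟩ with hf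
  have hinj : Function.Injective f := by
    intro a b hab
    have : statF (l.rotate a.1) = statF (l.rotate b.1) := congrArg Fin.val hab
    rw [statF_rotate l hsum a.2, statF_rotate l hsum b.2] at this
    exact Fin.ext (rank_inj l a.2 b.2 this)
  have hsurj : Function.Surjective f := Finite.surjective_of_injective hinj
  obtain ⟨i, hi⟩ := hsurj ⟨m, hm⟩
  refine ⟨i.1, ⟨i.2, congrArg Fin.val hi⟩, ?_⟩
  rintro j ⟨hj, hj2⟩
  have h3 : f ⟨j, hj⟩ = f i := by
    rw [hi]
    exact Fin.ext hj2
  exact congrArg Fin.val (hinj h3)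

/-- the pick of the rotation index realizing statistic `m` -/
noncomputable def pick (l : List ℤ) (m : ℕ) : ℕ :=
  if h : l ≠ [] ∧ l.sum = 1 ∧ m < l.length then
    Classical.choose (exists_unique_rot l h.1 h.2.1 h.2.2).exists
  else 0

lemma pick_spec (l : List ℤ) (hne : l ≠ []) (hsum : l.sum = 1) {m : ℕ}
    (hm : m < l.length) :
    pick l m < l.length ∧ statF (l.rotate (pick l m)) = m := by
  rw [pick, dif_pos ⟨hne, hsum, hm⟩]
  exact Classical.choose_spec (exists_unique_rot l hne hsum hm).exists

lemma pick_unique (l : List ℤ) (hne : l ≠ []) (hsum : l.sum = 1) {m i : ℕ}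
    (hm : m < l.length) (hi : i < l.length) (hstat : statF (l.rotate i) = m) :
    i = pick l m := by
  obtain ⟨h1, -, h2⟩ := exists_unique_rot l hne hsum hm
  rw [h2 i ⟨hi, hstat⟩, h2 (pick l m) (pick_spec l hne hsum hm)]

/-- the predicate from the theorem statement -/
def P (n m : ℕ) (L : List (ℤ × ℤ)) : Prop :=
  L.length = n + 1 ∧
  (∀ s ∈ L, s = ((1 : ℤ), (1 : ℤ)) ∨ s = ((1 : ℤ), (-1 : ℤ)) ∨ s = ((1 : ℤ), (0 : ℤ))) ∧
  (L.map Prod.snd).sum = 1 ∧ cstat L = m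

lemma map_snd_facts {n m : ℕ} {L : List (ℤ × ℤ)} (h : P n m L) :
    (L.map Prod.snd).length = n + 1 ∧ L.map Prod.snd ≠ [] ∧ (L.map Prod.snd).sum = 1 := by
  refine ⟨by simp [h.1], ?_, h.2.2.1⟩
  intro hc
  have := congrArg List.length hc
  simp [h.1] at this

lemma P_rotate {n m m' : ℕ} (hm' : m' ≤ n) {L : List (ℤ × ℤ)} (h : P n m L) :
    P n m' (L.rotate (pick (L.map Prod.snd) m')) := by
  obtain ⟨hlen, hne, hsum⟩ := map_snd_facts h
  set l := L.map Prod.snd with hl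
  set i := pick l m' with hi
  obtain ⟨hiN, hstat⟩ := pick_spec l hne hsum (m := m') (by omega)
  have hmap : (L.rotate i).map Prod.snd = l.rotate i := (List.map_rotate _ _ _).symm ▸ rfl
  refine ⟨by simp [List.length_rotate, h.1], ?_, ?_, ?_⟩
  · intro s hs
    exact h.2.1 s ((List.mem_rotate).mp hs)
  · rw [hmap]
    rw [(List.rotate_perm l i).sum_eq]
    exact hsum
  · rw [cstat_eq, hmap, hstat]

lemma rotate_pick_rotate {n m m' : ℕ} (hm : m ≤ n) (hm' : m' ≤ n) {L : List (ℤ × ℤ)}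
    (h : P n m L) :
    (L.rotate (pick (L.map Prod.snd) m')).rotate
      (pick ((L.rotate (pick (L.map Prod.snd) m')).map Prod.snd) m) = L := by
  obtain ⟨hlen, hne, hsum⟩ := map_snd_facts h
  set l := L.map Prod.snd with hl
  set i := pick l m' with hi
  obtain ⟨hiN, -⟩ := pick_spec l hne hsum (m := m') (by omega)
  have hmap : (L.rotate i).map Prod.snd = l.rotate i := by
    rw [List.map_rotate]
  rw [hmap]
  set l2 := l.rotate i with hl2
  have hne2 : l2 ≠ [] := by
    intro hc; have := congrArg List.length hc; simp [hl2, List.length_rotate, hlen] at this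
  have hsum2 : l2.sum = 1 := by rw [hl2, (List.rotate_perm l i).sum_eq]; exact hsum
  have hlen2 : l2.length = n + 1 := by simp [hl2, List.length_rotate, hlen]
  set i2 := pick l2 m with hi2
  obtain ⟨hi2N, hstat2⟩ := pick_spec l2 hne2 hsum2 (m := m) (by omega)
  rw [List.rotate_rotate]
  -- l.rotate ((i + i2) % N) has statistic m, and so does l.rotate 0 = l
  have hLlen : L.length = l.length := by simp [hl]
  have hNpos : 0 < l.length := by rw [hlen]; omega
  have hcomp : statF (l.rotate ((i + i2) % l.length)) = m := by
    rw [List.rotate_mod, ← List.rotate_rotate]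
    exact hstat2
  have h0 : statF (l.rotate 0) = m := by
    rw [List.rotate_zero, ← cstat_eq]; exact h.2.2.2
  have e1 := pick_unique l hne hsum (m := m) (by omega)
    (Nat.mod_lt _ hNpos) hcomp
  have e2 := pick_unique l hne hsum (m := m) (by omega) hNpos h0
  have : (i + i2) % l.length = 0 := by rw [e1, ← e2]
  calc L.rotate (i + i2) = L.rotate ((i + i2) % L.length) := (List.rotate_mod _ _).symm
    _ = L.rotate 0 := by rw [hLlen, this]
    _ = L := List.rotate_zero L

/-- the rotation equivalence between statistic classes -/
noncomputable def rotEquiv (n m m' : ℕ) (hm : m ≤ n) (hm' : m' ≤ n) :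
    {L : List (ℤ × ℤ) // P n m L} ≃ {L : List (ℤ × ℤ) // P n m' L} where
  toFun x := ⟨x.1.rotate (pick (x.1.map Prod.snd) m'), P_rotate hm' x.2⟩
  invFun x := ⟨x.1.rotate (pick (x.1.map Prod.snd) m), P_rotate hm x.2⟩
  left_inv x := Subtype.ext (rotate_pick_rotate hm hm' x.2)
  right_inv x := Subtype.ext (rotate_pick_rotate hm' hm x.2)

/-- Motzkin predicate -/
def M (n : ℕ) (L : List (ℤ × ℤ)) : Prop :=
  L.length = n ∧
  (∀ s ∈ L, s = ((1 : ℤ), (1 : ℤ)) ∨ s = ((1 : ℤ), (-1 : ℤ)) ∨ s = ((1 : ℤ), (0 : ℤ))) ∧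
  (L.map Prod.snd).sum = 0 ∧
  (∀ h ∈ (L.map Prod.snd).scanl (· + ·) 0, 0 ≤ h)

lemma scanl_nonneg_iff (l : List ℤ) :
    (∀ h ∈ l.scanl (· + ·) 0, 0 ≤ h) ↔ ∀ j ≤ l.length, 0 ≤ S l j := by
  rw [scanl_eq_map l 0]
  constructor
  · intro h j hj
    have : (0 : ℤ) + S l j ∈ (List.range (l.length + 1)).map (fun j => 0 + S l j) :=
      List.mem_map.mpr ⟨j, List.mem_range.mpr (by omega), rfl⟩
    have := h _ this
    omega
  · intro h x hx
    obtain ⟨j, hj, rfl⟩ := List.mem_map.mp hx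
    have := h j (by rw [List.mem_range] at hj; omega)
    omega

lemma statF_eq_zero_iff (l : List ℤ) :
    statF l = 0 ↔ ∀ j < l.length, 0 < S l (j + 1) := by
  unfold statF
  rw [Finset.card_eq_zero, Finset.filter_eq_empty_iff]
  constructor
  · intro h j hj
    have := h (Finset.mem_range.mpr hj)
    omega
  · intro h j hj
    have := h j (Finset.mem_range.mp hj)
    omega

lemma head_eq {n : ℕ} {L : List (ℤ × ℤ)} (h : P n 0 L) :
    ∃ T, L = ((1 : ℤ), (1 : ℤ)) :: T := by
  obtain ⟨hlen, hsteps, hsum, hstat⟩ := h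
  rcases L with - | ⟨a, T⟩
  · simp at hlen
  refine ⟨T, ?_⟩
  have hstat' : statF ((a :: T).map Prod.snd) = 0 := by rw [← cstat_eq]; exact hstat
  rw [statF_eq_zero_iff] at hstat'
  have h1 := hstat' 0 (by simp)
  rw [List.map_cons, S_cons, S_zero] at h1
  have ha := hsteps a (List.mem_cons_self)
  rcases ha with rfl | rfl | rfl
  · rfl
  · simp at h1
  · simp at h1

lemma tail_mem {n : ℕ} {L : List (ℤ × ℤ)} (h : P n 0 L) : M n L.tail := by
  obtain ⟨T, rfl⟩ := head_eq h
  obtain ⟨hlen, hsteps, hsum, hstat⟩ := h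
  simp only [List.tail_cons]
  have hstat' : statF ((((1:ℤ),(1:ℤ)) :: T).map Prod.snd) = 0 := by
    rw [← cstat_eq]; exact hstat
  rw [statF_eq_zero_iff] at hstat'
  refine ⟨by simpa using hlen, fun s hs => hsteps s (List.mem_cons_of_mem _ hs), ?_, ?_⟩
  · rw [List.map_cons, List.sum_cons] at hsum
    omega
  · rw [scanl_nonneg_iff]
    intro j hj
    rcases Nat.eq_zero_or_pos j with rfl | hj0
    · rw [S_zero]
    · obtain ⟨k, rfl⟩ := Nat.exists_eq_succ_of_ne_zero (by omega : j ≠ 0)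
      rw [List.length_map] at hj
      have h2 := hstat' (k + 1) (by simp; omega)
      rw [List.map_cons, S_cons] at h2
      have e : k.succ = k + 1 := rfl
      rw [e]
      omega

lemma cons_mem {n : ℕ} {L : List (ℤ × ℤ)} (h : M n L) :
    P n 0 (((1 : ℤ), (1 : ℤ)) :: L) := by
  obtain ⟨hlen, hsteps, hsum, hscan⟩ := h
  refine ⟨by simpa using hlen, ?_, ?_, ?_⟩
  · intro s hs
    rcases List.mem_cons.mp hs with rfl | hs
    · left; rfl
    · exact hsteps s hs
  · rw [List.map_cons, List.sum_cons, hsum]; omega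
  · rw [cstat_eq, statF_eq_zero_iff]
    rw [scanl_nonneg_iff] at hscan
    intro j hj
    rw [List.map_cons, S_cons]
    have : 0 ≤ S (L.map Prod.snd) j := hscan j (by simp at hj ⊢; omega)
    omega

/-- the equivalence with Motzkin paths for statistic 0 -/
noncomputable def zeroEquiv (n : ℕ) :
    {L : List (ℤ × ℤ) // P n 0 L} ≃ {L : List (ℤ × ℤ) // M n L} where
  toFun x := ⟨x.1.tail, tail_mem x.2⟩
  invFun x := ⟨((1 : ℤ), (1 : ℤ)) :: x.1, cons_mem x.2⟩
  left_inv x := by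
    obtain ⟨L, h⟩ := x
    obtain ⟨T, rfl⟩ := head_eq h
    rfl
  right_inv x := rfl

end CFAux

/-- Chung-Feller theorem of Dyck type for Motzkin steps: for `0 ≤ m ≤ n`, the number
of paths of `n+1` steps from `{(1,1),(1,-1),(1,0)}` starting at `(0,0)`, ending on the
line `y = 1`, having exactly `m` steps whose ending height is `≤ 0`, equals the
`n`-th Motzkin number. -/
theorem chung_feller_dyck_type_motzkin_steps (n m : ℕ) (hm : m ≤ n) :
    Nat.card {L : List (ℤ × ℤ) //
      L.length = n + 1 ∧
      (∀ s ∈ L, s = ((1 : ℤ), (1 : ℤ)) ∨ s = ((1 : ℤ), (-1 : ℤ)) ∨ s = ((1 : ℤ), (0 : ℤ))) ∧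
      (L.map Prod.snd).sum = 1 ∧
      ((L.zip (((L.map Prod.snd).scanl (· + ·) 0).tail)).countP
        (fun p => decide (p.2 ≤ 0))) = m} = motzkin n := by
  have e1 : {L : List (ℤ × ℤ) // CFAux.P n m L} ≃ {L : List (ℤ × ℤ) // CFAux.P n 0 L} :=
    CFAux.rotEquiv n m 0 hm (Nat.zero_le n)
  have e2 := (CFAux.zeroEquiv n)
  calc Nat.card {L : List (ℤ × ℤ) // CFAux.P n m L}
      = Nat.card {L : List (ℤ × ℤ) // CFAux.P n 0 L} := Nat.card_congr e1
    _ = Nat.card {L : List (ℤ × ℤ) // CFAux.M n L} := Nat.card_congr e2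
    _ = motzkin n := rfl
end

section
/- For each 0 ≤ m ≤ n, the number of lattice paths of 2n steps with steps U=(1,1) and D=(1,-1) from (0,0) to (2n,0), such that the number of U-steps weakly to the left of the rightmost minimum point equals m, is the n-th Catalan number C_n (independent of m). -/
namespace CFAux

open List

/-- Prefix sum of a list of integers. -/
def pS (v : List ℤ) (k : ℕ) : ℤ := (v.take k).sum

/-- All entries are `1` or `-1`. -/
def Steps (v : List ℤ) : Prop := ∀ x ∈ v, x = 1 ∨ x = -1

/-- `i` is the rightmost minimum index of the prefix-sum sequence. -/
def RM (v : List ℤ) (i : ℕ) : Prop :=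
  i ≤ v.length ∧ (∀ k ≤ v.length, pS v i ≤ pS v k) ∧
    ∀ k, i < k → k ≤ v.length → pS v i < pS v k

/-- The step-list version of the counted predicate. -/
def QQ (n m : ℕ) (v : List ℤ) : Prop :=
  v.length = 2 * n ∧ Steps v ∧ v.sum = 0 ∧
    ∃ i, RM v i ∧ (v.take i).count 1 = m

lemma pS_zero (v : List ℤ) : pS v 0 = 0 := rfl

lemma pS_of_le (v : List ℤ) {k : ℕ} (h : v.length ≤ k) : pS v k = v.sum := by
  rw [pS, take_of_length_le h]

lemma pS_len (v : List ℤ) : pS v v.length = v.sum := pS_of_le v le_rfl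

lemma pS_succ (v : List ℤ) {i : ℕ} (h : i < v.length) :
    pS v (i + 1) = pS v i + v[i] := by
  have h2 : v.take (i + 1) = v.take i ++ [v[i]] := by
    rw [take_succ, getElem?_eq_getElem h]; rfl
  rw [pS, h2, sum_append, sum_cons, sum_nil, add_zero]; rfl

lemma pS_add (v : List ℤ) (i k : ℕ) : pS v (i + k) = pS v i + pS (v.drop i) k := by
  rw [pS, take_add, sum_append]; rfl

lemma pS_append_left {Y : List ℤ} (Z : List ℤ) {k : ℕ} (h : k ≤ Y.length) :
    pS (Y ++ Z) k = pS Y k := by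
  rw [pS, take_append_of_le_length h]; rfl

lemma pS_append_right (Y Z : List ℤ) (t : ℕ) :
    pS (Y ++ Z) (Y.length + t) = Y.sum + pS Z t := by
  rw [pS, take_append, sum_append, take_of_length_le (by omega), Nat.add_sub_cancel_left]; rfl

lemma pS_take (v : List ℤ) {i k : ℕ} (h : k ≤ i) : pS (v.take i) k = pS v k := by
  rw [pS, take_take, min_eq_left h]; rfl

lemma count_take_append_left {Y : List ℤ} (Z : List ℤ) {k : ℕ} (h : k ≤ Y.length) (a : ℤ) :
    ((Y ++ Z).take k).count a = (Y.take k).count a := by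
  rw [take_append_of_le_length h]

lemma count_take_append_right (Y Z : List ℤ) (t : ℕ) (a : ℤ) :
    ((Y ++ Z).take (Y.length + t)).count a = Y.count a + (Z.take t).count a := by
  rw [take_append, count_append, take_of_length_le (by omega), Nat.add_sub_cancel_left]

lemma steps_sublist {v w : List ℤ} (h : w <+ v) (hv : Steps v) : Steps w :=
  fun x hx => hv x (h.subset hx)

lemma steps_sum (v : List ℤ) (hv : Steps v) :
    v.sum = 2 * (v.count 1 : ℤ) - v.length := by
  induction v with
  | nil => simp
  | cons a l ih =>
    have ha := hv a mem_cons_self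
    have hl := ih (fun x hx => hv x (mem_cons_of_mem _ hx))
    rcases ha with h | h <;> subst h <;>
      simp only [sum_cons, hl, count_cons, length_cons] <;> norm_num <;> push_cast <;> ring

lemma steps_count_one {n : ℕ} {v : List ℤ} (hlen : v.length = 2 * n) (hv : Steps v)
    (hsum : v.sum = 0) : v.count 1 = n := by
  have := steps_sum v hv
  rw [hsum, hlen] at this
  have : (2 : ℤ) * (v.count 1 : ℤ) = 2 * n := by push_cast at this ⊢; omega
  exact_mod_cast mul_left_cancel₀ (by norm_num) this

lemma rm_unique {v : List ℤ} {i j : ℕ} (hi : RM v i) (hj : RM v j) : i = j := by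
  by_contra hne
  rcases Nat.lt_or_ge i j with h | h
  · exact absurd (hj.2.1 i hi.1) (not_le.mpr (hi.2.2 j h hj.1))
  · have h' : j < i := lt_of_le_of_ne h (fun e => hne e.symm)
    exact absurd (hi.2.1 j hj.1) (not_le.mpr (hj.2.2 i h' hi.1))

/-- Characterization of `QQ n n`: Dyck paths. -/
lemma QQ_self_iff (n : ℕ) (v : List ℤ) :
    QQ n n v ↔ v.length = 2 * n ∧ Steps v ∧ v.sum = 0 ∧ ∀ k ≤ v.length, 0 ≤ pS v k := by
  constructor
  · rintro ⟨hlen, hst, hsum, i, ⟨hile, hmin, hstrict⟩, hcount⟩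
    refine ⟨hlen, hst, hsum, ?_⟩
    have hc1 : v.count 1 = n := steps_count_one hlen hst hsum
    have hieq : i = v.length := by
      by_contra hne
      have hilt : i < v.length := lt_of_le_of_ne hile hne
      have h1 : pS v i < pS v (i + 1) := hstrict (i + 1) (Nat.lt_succ_self i) hilt
      rw [pS_succ v hilt] at h1
      have hv1 : v[i] = 1 := by
        rcases hst v[i] (getElem_mem hilt) with h | h
        · exact h
        · omega
      have : (v.take (i + 1)).count 1 = n + 1 := by
        rw [take_succ, getElem?_eq_getElem hilt]
        simp [hcount, hv1]
      have hle : (v.take (i + 1)).count 1 ≤ v.count 1 := (take_sublist _ v).count_le 1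
      omega
    intro k hk
    have := hmin k hk
    rwa [hieq, pS_len, hsum] at this
  · rintro ⟨hlen, hst, hsum, hpos⟩
    refine ⟨hlen, hst, hsum, v.length, ⟨le_rfl, ?_, ?_⟩, ?_⟩
    · intro k hk; rw [pS_len, hsum]; exact hpos k hk
    · intro k hk hk'; omega
    · rw [take_length]; exact steps_count_one hlen hst hsum

end CFAux
namespace CFAux
open List
open scoped Classical

/-- Rotation at the rightmost minimum: sends a path with statistic `m < n` to a Dyck path. -/
noncomputable def Fmap (v : List ℤ) : List ℤ :=
  if h : ∃ i, RM v i then v.drop (h.choose + 1) ++ 1 :: v.take h.choose else v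

/-- Inverse rotation: cut just before the `r`-th up-step. -/
noncomputable def Gmap (r : ℕ) (v : List ℤ) : List ℤ :=
  if h : ∃ j, r ≤ (v.take j).count 1 then
    v.drop (Nat.find h) ++ 1 :: v.take (Nat.find h - 1)
  else v

lemma Fmap_eq {v : List ℤ} {i : ℕ} (hi : RM v i) :
    Fmap v = v.drop (i + 1) ++ 1 :: v.take i := by
  have hex : ∃ j, RM v j := ⟨i, hi⟩
  rw [Fmap, dif_pos hex, rm_unique hex.choose_spec hi]

lemma F_spec {n m : ℕ} {v : List ℤ} (hmn : m < n) (hv : QQ n m v) :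
    QQ n n (Fmap v) ∧ Gmap (n - m) (Fmap v) = v := by
  obtain ⟨hlen, hst, hsum, i, hi, hc⟩ := hv
  have hc1 : v.count 1 = n := steps_count_one hlen hst hsum
  -- i < length
  have hilt : i < v.length := by
    rcases Nat.lt_or_ge i v.length with h | h
    · exact h
    · exfalso
      have : i = v.length := le_antisymm hi.1 h
      rw [this, take_length, hc1] at hc
      omega
  -- the step at i is an up-step
  have hv1 : v[i] = 1 := by
    have h1 : pS v i < pS v (i + 1) := hi.2.2 (i + 1) (Nat.lt_succ_self i) hilt
    rw [pS_succ v hilt] at h1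
    rcases hst v[i] (getElem_mem hilt) with h | h
    · exact h
    · omega
  set A := v.take i with hA
  set B := v.drop (i + 1) with hB
  have hvsplit : v = A ++ 1 :: B := by
    conv_lhs => rw [← take_append_drop i v, drop_eq_getElem_cons hilt, hv1]
  have hAlen : A.length = i := by rw [hA, length_take, min_eq_left hilt.le]
  have hBlen : B.length = v.length - (i + 1) := by rw [hB, length_drop]
  have hAsum : A.sum = pS v i := rfl
  have hsplitsum : A.sum + (1 + B.sum) = 0 := by
    have := hsum; rw [hvsplit, sum_append, sum_cons] at this; linarith
  have hBsum : B.sum = -pS v i - 1 := by rw [← hAsum]; linarith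
  set w := B ++ 1 :: A with hw
  have hwlen : w.length = 2 * n := by
    rw [hw, length_append, length_cons, hAlen, hBlen]; omega
  have hwsum : w.sum = 0 := by
    rw [hw, sum_append, sum_cons]; linarith
  have hwst : Steps w := by
    intro x hx
    rw [hw, mem_append, mem_cons] at hx
    rcases hx with h | h | h
    · exact hst x ((drop_subset _ _) h)
    · left; exact h
    · exact hst x ((take_subset _ _) h)
  -- nonnegativity of prefix sums of w
  have hpos : ∀ k ≤ w.length, 0 ≤ pS w k := by
    intro k hk
    rcases Nat.lt_or_ge k (B.length + 1) with hcase | hcase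
    · -- k ≤ B.length
      have hkB : k ≤ B.length := by omega
      rw [hw, pS_append_left _ hkB]
      have hadd : pS v (i + 1 + k) = pS v (i + 1) + pS B k := by
        rw [hB, ← pS_add]
      have hkv : i + 1 + k ≤ v.length := by omega
      have hgt : pS v i < pS v (i + 1 + k) := hi.2.2 _ (by omega) hkv
      have hsuc : pS v (i + 1) = pS v i + 1 := by rw [pS_succ v hilt, hv1]
      omega
    · -- k = B.length + s, 1 ≤ s ≤ i + 1
      obtain ⟨s, hs⟩ : ∃ s, k = B.length + s := ⟨k - B.length, by omega⟩
      have hs1 : 1 ≤ s := by omega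
      have hsle : s ≤ i + 1 := by rw [hwlen] at hk; omega
      rw [hw, hs, pS_append_right]
      have h1A : (1 :: A) = [1] ++ A := rfl
      have hps : pS (1 :: A) s = 1 + pS A (s - 1) := by
        rw [h1A]
        have : s = [(1 : ℤ)].length + (s - 1) := by simp; omega
        rw [this, pS_append_right]; simp
      have hpA : pS A (s - 1) = pS v (s - 1) := pS_take v (by omega)
      have hmin : pS v i ≤ pS v (s - 1) := hi.2.1 _ (by omega)
      rw [hps, hpA, hBsum]; linarith
  have hQQ : QQ n n w := (QQ_self_iff n w).mpr ⟨hwlen, hwst, hwsum, hpos⟩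
  -- counts
  have hcB : B.count 1 = n - m - 1 := by
    have h1 : v.count 1 = A.count 1 + (1 + B.count 1) := by
      rw [hvsplit]; simp [count_cons]; omega
    have hcm : A.count 1 = m := hc
    omega
  have hwc1 : w.count 1 = n := steps_count_one hwlen hwst hwsum
  -- compute Gmap (n-m) w = v
  have hFv : Fmap v = w := Fmap_eq hi
  refine ⟨hFv ▸ hQQ, ?_⟩
  rw [hFv]
  have hex : ∃ j, n - m ≤ (w.take j).count 1 := by
    refine ⟨w.length, ?_⟩
    rw [take_length, hwc1]; omega
  rw [Gmap, dif_pos hex]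
  have hfind : Nat.find hex = B.length + 1 := by
    rw [Nat.find_eq_iff]
    constructor
    · have htk : w.take (B.length + 1) = B ++ [1] := by
        rw [hw, take_append, take_of_length_le (by omega), Nat.add_sub_cancel_left] <;> rfl
      rw [htk, count_append]
      simp; omega
    · intro j hj
      have hjB : j ≤ B.length := by omega
      rw [hw, count_take_append_left _ hjB]
      have : ((B.take j).count 1) ≤ B.count 1 := (take_sublist _ _).count_le 1
      omega
  rw [hfind]
  have hdrop : w.drop (B.length + 1) = A := by
    have : w = (B ++ [1]) ++ A := by rw [hw]; simp
    rw [this, drop_left' (by simp)]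
  have htake : w.take (B.length + 1 - 1) = B := by
    have : B.length + 1 - 1 = B.length := by omega
    rw [this, hw, take_left' rfl]
  rw [hdrop, htake, ← hvsplit]

end CFAux
namespace CFAux
open List
open scoped Classical

lemma G_spec {n m : ℕ} {v : List ℤ} (hmn : m < n) (hv : QQ n n v) :
    QQ n m (Gmap (n - m) v) ∧ Fmap (Gmap (n - m) v) = v := by
  obtain ⟨hlen, hst, hsum, hpos⟩ := (QQ_self_iff n v).mp hv
  have hc1 : v.count 1 = n := steps_count_one hlen hst hsum
  have hex : ∃ j, n - m ≤ (v.take j).count 1 := ⟨v.length, by rw [take_length, hc1]; omega⟩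
  set j := Nat.find hex with hj
  have hjs : n - m ≤ (v.take j).count 1 := Nat.find_spec hex
  have hj1 : 0 < j := by
    rcases Nat.eq_zero_or_pos j with h | h
    · exfalso; rw [h] at hjs; simp at hjs; omega
    · exact h
  have hjlen : j ≤ v.length := Nat.find_le (by rw [take_length, hc1]; omega)
  have hjm : (v.take (j - 1)).count 1 < n - m := by
    have := Nat.find_min hex (show j - 1 < j by omega)
    omega
  have hjlt : j - 1 < v.length := by omega
  have htkj : v.take j = v.take (j - 1) ++ [v[j - 1]] := by
    have h1 : j = (j - 1) + 1 := by omega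
    conv_lhs => rw [h1]
    rw [take_succ, getElem?_eq_getElem hjlt]; rfl
  have hv1 : v[j - 1] = 1 := by
    rcases hst v[j - 1] (getElem_mem hjlt) with h | h
    · exact h
    · exfalso
      rw [htkj, count_append, h] at hjs
      simp at hjs; omega
  have hcj : (v.take j).count 1 = n - m := by
    rw [htkj, count_append, hv1] at hjs ⊢
    simp at hjs ⊢; omega
  set X := v.take (j - 1) with hX
  set Y := v.drop j with hY
  have hvsplit : v = X ++ 1 :: Y := by
    have h1 : j = (j - 1) + 1 := by omega
    conv_lhs => rw [← take_append_drop (j - 1) v, drop_eq_getElem_cons hjlt, hv1, ← h1]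
  have hXlen : X.length = j - 1 := by rw [hX, length_take, min_eq_left hjlt.le]
  have hYlen : Y.length = v.length - j := by rw [hY, length_drop]
  have hXsum : X.sum = pS v (j - 1) := rfl
  have hpSj : pS v j = pS v (j - 1) + 1 := by
    have h1 : j = (j - 1) + 1 := by omega
    conv_lhs => rw [h1]
    rw [pS_succ v hjlt, hv1]
  have hcpos : 0 ≤ pS v (j - 1) := hpos _ (by omega)
  have hsplitsum : X.sum + (1 + Y.sum) = 0 := by
    have := hsum; rw [hvsplit, sum_append, sum_cons] at this; linarith
  have hYsum : Y.sum = -pS v j := by rw [hpSj, ← hXsum]; linarith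
  set w := Y ++ 1 :: X with hw
  have hwlen : w.length = 2 * n := by
    rw [hw, length_append, length_cons, hXlen, hYlen]; omega
  have hwsum : w.sum = 0 := by rw [hw, sum_append, sum_cons]; linarith
  have hwst : Steps w := by
    intro x hx
    rw [hw, mem_append, mem_cons] at hx
    rcases hx with h | h | h
    · exact hst x ((drop_subset _ _) h)
    · left; exact h
    · exact hst x ((take_subset _ _) h)
  have hpSwY : pS w Y.length = -pS v j := by
    rw [hw, pS_append_left _ le_rfl, pS, take_length, hYsum]
  -- prefix sums of w in the two regimes
  have hreg1 : ∀ k ≤ Y.length, pS w k = pS v (j + k) - pS v j := by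
    intro k hk
    rw [hw, pS_append_left _ hk]
    have : pS v (j + k) = pS v j + pS Y k := by rw [hY, ← pS_add]
    omega
  have hreg2 : ∀ s, 1 ≤ s → s ≤ j → pS w (Y.length + s) = pS v (s - 1) + 1 - pS v j := by
    intro s hs1 hs2
    rw [hw, pS_append_right]
    have h1A : (1 :: X) = [1] ++ X := rfl
    have hps : pS (1 :: X) s = 1 + pS X (s - 1) := by
      rw [h1A]
      have h2 : s = [(1 : ℤ)].length + (s - 1) := by simp; omega
      rw [h2, pS_append_right]; simp
    have hpX : pS X (s - 1) = pS v (s - 1) := pS_take v (by omega)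
    rw [hps, hpX, hYsum]; ring
  have hRM : RM w Y.length := by
    refine ⟨by rw [hwlen]; omega, ?_, ?_⟩
    · intro k hk
      rcases Nat.lt_or_ge k (Y.length + 1) with hcase | hcase
      · rw [hreg1 k (by omega), hpSwY]
        have := hpos (j + k) (by omega)
        omega
      · obtain ⟨s, hs⟩ : ∃ s, k = Y.length + s := ⟨k - Y.length, by omega⟩
        have hsj : s ≤ j := by rw [hwlen] at hk; omega
        rw [hs, hreg2 s (by omega) hsj, hpSwY]
        have := hpos (s - 1) (by omega)
        omega
    · intro k hkgt hkle
      obtain ⟨s, hs⟩ : ∃ s, k = Y.length + s := ⟨k - Y.length, by omega⟩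
      have hs1 : 1 ≤ s := by omega
      have hsj : s ≤ j := by rw [hwlen] at hkle; omega
      rw [hs, hreg2 s hs1 hsj, hpSwY]
      have := hpos (s - 1) (by omega)
      omega
  have hcY : Y.count 1 = m := by
    have h1 : v.count 1 = (v.take j).count 1 + Y.count 1 := by
      conv_lhs => rw [← take_append_drop j v]
      rw [count_append]
    omega
  have hcw : (w.take Y.length).count 1 = m := by
    rw [hw, take_append_of_le_length le_rfl, take_length, hcY]
  have hQQ : QQ n m w := ⟨hwlen, hwst, hwsum, Y.length, hRM, hcw⟩
  have hGv : Gmap (n - m) v = w := by rw [Gmap, dif_pos hex, ← hj, ← hY, ← hX, ← hw]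
  refine ⟨hGv ▸ hQQ, ?_⟩
  rw [hGv, Fmap_eq hRM]
  have hdrop : w.drop (Y.length + 1) = X := by
    have h1 : w = (Y ++ [1]) ++ X := by rw [hw]; simp
    rw [h1, drop_left' (by simp)]
  have htake : w.take Y.length = Y := by rw [hw, take_left' rfl]
  rw [hdrop, htake, ← hvsplit]

/-- The equivalence between paths with statistic `m` and Dyck paths (statistic `n`). -/
noncomputable def equivQQ (n m : ℕ) (hmn : m ≤ n) : {v // QQ n m v} ≃ {v // QQ n n v} :=
  if h : m < n then
    { toFun := fun x => ⟨Fmap x.1, (F_spec h x.2).1⟩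
      invFun := fun y => ⟨Gmap (n - m) y.1, (G_spec h y.2).1⟩
      left_inv := fun x => Subtype.ext (F_spec h x.2).2
      right_inv := fun y => Subtype.ext (G_spec h y.2).2 }
  else by
    have heq : m = n := le_antisymm hmn (not_lt.mp h)
    subst heq
    exact Equiv.refl _

end CFAux
namespace CFAux
open List

lemma scanl_getD : ∀ (v : List ℤ) (a : ℤ) (k : ℕ), k ≤ v.length →
    (v.scanl (· + ·) a).getD k 0 = a + (v.take k).sum
  | [], _, 0, _ => by simp
  | [], _, k + 1, h => by simp at h
  | x :: l, a, 0, _ => by simp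
  | x :: l, a, k + 1, h => by
    rw [scanl_cons, getD_cons_succ,
      scanl_getD l (a + x) k (by simpa using h), take_succ_cons, sum_cons]
    ring

lemma scanl_mem : ∀ (v : List ℤ) (a x : ℤ),
    x ∈ v.scanl (· + ·) a ↔ ∃ k, k ≤ v.length ∧ x = a + (v.take k).sum
  | [], a, x => by simp [eq_comm]
  | y :: l, a, x => by
    rw [scanl_cons, mem_cons, scanl_mem l (a + y) x]
    constructor
    · rintro (rfl | ⟨k, hk, rfl⟩)
      · exact ⟨0, by simp⟩
      · exact ⟨k + 1, by simpa using hk, by rw [take_succ_cons, sum_cons]; ring⟩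
    · rintro ⟨k, hk, rfl⟩
      cases k with
      | zero => left; simp
      | succ k =>
        right
        exact ⟨k, by simpa using hk, by rw [take_succ_cons, sum_cons]; ring⟩

lemma isRightmostMin_iff (L : List (ℤ × ℤ)) (i : ℕ) :
    IsRightmostMin L i ↔ RM (L.map Prod.snd) i := by
  set v := L.map Prod.snd with hv
  have hlen : (pts L).length = v.length + 1 := by rw [pts, length_scanl]
  have hg : ∀ k, k ≤ v.length → (pts L).getD k 0 = pS v k := by
    intro k hk
    rw [pts, scanl_getD v 0 k hk, zero_add]; rfl
  have hmem : ∀ k, k ≤ v.length → pS v k ∈ pts L := by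
    intro k hk
    rw [pts, scanl_mem]
    exact ⟨k, hk, by rw [zero_add]; rfl⟩
  constructor
  · rintro ⟨h1, h2, h3⟩
    have hi : i ≤ v.length := by omega
    refine ⟨hi, ?_, ?_⟩
    · intro k hk
      have := h2 (pS v k) (hmem k hk)
      rwa [hg i hi] at this
    · intro k hik hk
      have := h3 k hik (by omega)
      rwa [hg i hi, hg k hk] at this
  · rintro ⟨hi, h2, h3⟩
    refine ⟨by omega, ?_, ?_⟩
    · intro x hx
      rw [pts, scanl_mem] at hx
      obtain ⟨k, hk, rfl⟩ := hx
      rw [hg i hi, zero_add]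
      exact h2 k hk
    · intro k hik hk
      have hk' : k ≤ v.length := by omega
      rw [hg i hi, hg k hk']
      exact h3 k hik hk'

lemma count_pair : ∀ (L : List (ℤ × ℤ)),
    (∀ s ∈ L, s = ((1 : ℤ), (1 : ℤ)) ∨ s = ((1 : ℤ), (-1 : ℤ))) →
    L.count ((1 : ℤ), (1 : ℤ)) = (L.map Prod.snd).count 1
  | [], _ => rfl
  | s :: l, h => by
    have hl := count_pair l (fun x hx => h x (mem_cons_of_mem _ hx))
    rcases h s mem_cons_self with rfl | rfl <;>
      simp only [map_cons, count_cons, hl, Prod.mk.injEq] <;> norm_num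

lemma eq_map_pair : ∀ (L : List (ℤ × ℤ)),
    (∀ s ∈ L, s = ((1 : ℤ), (1 : ℤ)) ∨ s = ((1 : ℤ), (-1 : ℤ))) →
    (L.map Prod.snd).map (fun x => ((1 : ℤ), x)) = L
  | [], _ => rfl
  | s :: l, h => by
    have hl := eq_map_pair l (fun x hx => h x (mem_cons_of_mem _ hx))
    rcases h s mem_cons_self with rfl | rfl <;> simp [hl]

lemma map_snd_pair (v : List ℤ) : (v.map (fun x => ((1 : ℤ), x))).map Prod.snd = v := by
  rw [map_map]; exact map_id _

/-- Transfer from paths (pairs) to step lists. -/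
noncomputable def equivPQ (n m : ℕ) :
    {L : List (ℤ × ℤ) //
      L.length = 2 * n ∧
      (∀ s ∈ L, s = ((1 : ℤ), (1 : ℤ)) ∨ s = ((1 : ℤ), (-1 : ℤ))) ∧
      (L.map Prod.snd).sum = 0 ∧
      (∃ i, IsRightmostMin L i ∧ (L.take i).count ((1 : ℤ), (1 : ℤ)) = m)} ≃
    {v // QQ n m v} where
  toFun x := ⟨x.1.map Prod.snd, by
    obtain ⟨h1, h2, h3, i, h4, h5⟩ := x.2
    refine ⟨by simpa using h1, ?_, h3, i, (isRightmostMin_iff _ _).mp h4, ?_⟩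
    · intro y hy
      rw [mem_map] at hy
      obtain ⟨s, hs, rfl⟩ := hy
      rcases h2 s hs with rfl | rfl
      · left; rfl
      · right; rfl
    · rw [← map_take, ← count_pair _ (fun s hs => h2 s (take_subset _ _ hs))]
      exact h5⟩
  invFun y := ⟨y.1.map (fun x => ((1 : ℤ), x)), by
    obtain ⟨h1, h2, h3, i, h4, h5⟩ := y.2
    have hst : ∀ s ∈ y.1.map (fun x => ((1 : ℤ), x)),
        s = ((1 : ℤ), (1 : ℤ)) ∨ s = ((1 : ℤ), (-1 : ℤ)) := by
      intro s hs
      rw [mem_map] at hs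
      obtain ⟨x, hx, rfl⟩ := hs
      rcases h2 x hx with rfl | rfl
      · left; rfl
      · right; rfl
    refine ⟨by simpa using h1, hst, by rw [map_snd_pair]; exact h3, i, ?_, ?_⟩
    · rw [isRightmostMin_iff, map_snd_pair]; exact h4
    · rw [count_pair _ (fun s hs => hst s (take_subset _ _ hs)), ← map_take, map_snd_pair]
      exact h5⟩
  left_inv x := Subtype.ext (eq_map_pair x.1 x.2.2.1)
  right_inv y := Subtype.ext (map_snd_pair y.1)

open DyckStep in
/-- Convert a `±1` step to a `DyckStep`. -/
def toStep (x : ℤ) : DyckStep := if x = 1 then U else D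

open DyckStep in
/-- Convert a `DyckStep` to a `±1` step. -/
def ofStep (s : DyckStep) : ℤ := if s = U then 1 else -1

open DyckStep

lemma count_U_map (v : List ℤ) : (v.map toStep).count U = v.count 1 := by
  induction v with
  | nil => rfl
  | cons a l ih =>
    by_cases h : a = 1 <;> simp [toStep, count_cons, ih, h]

lemma count_one_map (w : List DyckStep) : (w.map ofStep).count 1 = w.count U := by
  induction w with
  | nil => rfl
  | cons s l ih => cases s <;> simp [ofStep, count_cons, ih]

lemma steps_of_map (w : List DyckStep) : Steps (w.map ofStep) := by
  intro x hx
  rw [mem_map] at hx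
  obtain ⟨s, _, rfl⟩ := hx
  cases s <;> simp [ofStep]

lemma ofStep_toStep (v : List ℤ) (hv : Steps v) : (v.map toStep).map ofStep = v := by
  induction v with
  | nil => rfl
  | cons a l ih =>
    have hl := ih (fun x hx => hv x (mem_cons_of_mem _ hx))
    rcases hv a mem_cons_self with rfl | rfl <;> simp [toStep, ofStep, hl]

lemma toStep_ofStep (w : List DyckStep) : (w.map ofStep).map toStep = w := by
  induction w with
  | nil => rfl
  | cons s l ih => cases s <;> simp [toStep, ofStep, ih]

lemma count_UD_length (w : List DyckStep) : w.count U + w.count D = w.length := by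
  induction w with
  | nil => rfl
  | cons s l ih => cases s <;> simp [count_cons, ← ih] <;> omega

/-- Equivalence between Dyck step-lists and Dyck words of semilength `n`. -/
noncomputable def equivQD (n : ℕ) : {v // QQ n n v} ≃ {p : DyckWord // p.semilength = n} where
  toFun x :=
    ⟨⟨x.1.map toStep, by
        obtain ⟨hlen, hst, hsum, hpos⟩ := (QQ_self_iff n x.1).mp x.2
        have hc1 : x.1.count 1 = n := steps_count_one hlen hst hsum
        have hL := count_UD_length (x.1.map toStep)
        rw [count_U_map, hc1] at hL ⊢
        simp only [length_map, hlen] at hL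
        omega, by
        intro k
        obtain ⟨hlen, hst, hsum, hpos⟩ := (QQ_self_iff n x.1).mp x.2
        have hsub : Steps (x.1.take k) := steps_sublist (take_sublist _ _) hst
        have hsum' := steps_sum _ hsub
        have hnn : 0 ≤ (x.1.take k).sum := by
          rcases le_or_gt k x.1.length with h | h
          · exact hpos k h
          · rw [take_of_length_le h.le, ← take_length (l := x.1)]
            exact hpos _ le_rfl
        rw [← map_take]
        have hUD := count_UD_length ((x.1.take k).map toStep)
        rw [count_U_map] at hUD ⊢
        have hlen' : ((x.1.take k).map toStep).length = (x.1.take k).length := length_map _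
        rw [hlen'] at hUD
        have : ((x.1.take k).count 1 : ℤ) * 2 ≥ (x.1.take k).length := by omega
        omega⟩, by
      show ((x.1.map toStep).count U) = n
      obtain ⟨hlen, hst, hsum, hpos⟩ := (QQ_self_iff n x.1).mp x.2
      rw [count_U_map, steps_count_one hlen hst hsum]⟩
  invFun y := ⟨y.1.toList.map ofStep, by
    rw [QQ_self_iff]
    have hlen : (y.1.toList.map ofStep).length = 2 * n := by
      rw [length_map, ← y.1.two_mul_semilength_eq_length, y.2]
    have hst := steps_of_map y.1.toList
    have hc1 : (y.1.toList.map ofStep).count 1 = n := by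
      rw [count_one_map]; exact y.2
    have hsum : (y.1.toList.map ofStep).sum = 0 := by
      have := steps_sum _ hst
      rw [hc1, hlen] at this
      rw [this]; push_cast; ring
    refine ⟨hlen, hst, hsum, ?_⟩
    intro k hk
    have hpre := y.1.count_D_le_count_U k
    have htk : (y.1.toList.map ofStep).take k = (y.1.toList.take k).map ofStep := by
      rw [map_take]
    have hsub : Steps ((y.1.toList.map ofStep).take k) := steps_sublist (take_sublist _ _) hst
    have hsum' := steps_sum _ hsub
    have hc1' : ((y.1.toList.map ofStep).take k).count 1 = (y.1.toList.take k).count U := by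
      rw [htk, count_one_map]
    have hUD := count_UD_length (y.1.toList.take k)
    have hlen' : ((y.1.toList.map ofStep).take k).length = (y.1.toList.take k).length := by
      rw [htk, length_map]
    rw [pS]
    rw [hc1', hlen'] at hsum'
    omega⟩
  left_inv x := Subtype.ext (ofStep_toStep x.1 ((QQ_self_iff n x.1).mp x.2).2.1)
  right_inv y := Subtype.ext (DyckWord.ext (toStep_ofStep y.1.toList))

end CFAux

/-- Chung-Feller theorem of Motzkin type for Dyck steps: for `0 ≤ m ≤ n`, the number
of lattice paths of `2n` steps from `{(1,1),(1,-1)}` from `(0,0)` to `(2n,0)` having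
exactly `m` up-steps among the steps weakly to the left of the rightmost minimum
point, equals the `n`-th Catalan number `(2n choose n)/(n+1)`. -/
theorem chung_feller_motzkin_type_dyck_steps (n m : ℕ) (hm : m ≤ n) :
    Nat.card {L : List (ℤ × ℤ) //
      L.length = 2 * n ∧
      (∀ s ∈ L, s = ((1 : ℤ), (1 : ℤ)) ∨ s = ((1 : ℤ), (-1 : ℤ))) ∧
      (L.map Prod.snd).sum = 0 ∧
      (∃ i, IsRightmostMin L i ∧ (L.take i).count ((1 : ℤ), (1 : ℤ)) = m)} =
    (2 * n).choose n / (n + 1) := by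
  rw [Nat.card_congr ((CFAux.equivPQ n m).trans ((CFAux.equivQQ n m hm).trans (CFAux.equivQD n))),
    Nat.card_eq_fintype_card, DyckWord.card_dyckWord_semilength_eq_catalan,
    catalan_eq_centralBinom_div, Nat.centralBinom_eq_two_mul_choose]
end

section
/- Let F(z) be a formal power series with constant term 1 satisfying F(z) = 1 + B(z)·F(z) + A(z)·F(z)^2, where A(z) = Σ_{i∈A} a_i z^i and B(z) = Σ_{i∈B} b_i z^i are polynomials with zero constant term. Define G(y,z) = 1/(1 − B(yz) − A(yz)·F(yz) − (A(yz)/y)·F(z)) and P(y,z) = 1 + Σ_{i∈B} b_i z^i (y^i−1)/(y−1) · F(z) + Σ_{i∈A} a_i z^i (y^{i-1}−1)/(y−1) · F(z)^2. Then G(y,z)·P(y,z) = (y·F(yz) − F(z))/(y − 1). -/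
open PowerSeries

private lemma cancel_Xsub1 {R : Type*} [CommRing R] {f g : PowerSeries (Polynomial R)}
    (h : PowerSeries.C (R := Polynomial R) (Polynomial.X - 1) * f
       = PowerSeries.C (R := Polynomial R) (Polynomial.X - 1) * g) : f = g := by
  apply PowerSeries.ext
  intro n
  have h1 := congrArg (PowerSeries.coeff (R := Polynomial R) n) h
  simp only [PowerSeries.coeff_C_mul] at h1
  have hm : (Polynomial.X - 1 : Polynomial R).Monic := by
    simpa using Polynomial.monic_X_sub_C (1 : R)
  exact hm.isRegular.left h1

private lemma rescale_C_poly {R : Type*} [CommRing R] (a c : R) :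
    PowerSeries.rescale a (PowerSeries.C (R := R) c) = PowerSeries.C (R := R) c := by
  apply PowerSeries.ext
  intro n
  simp only [PowerSeries.coeff_rescale, PowerSeries.coeff_C]
  split_ifs with h
  · subst h; simp
  · simp


/-- The algebraic core of the Dyck-type Chung-Feller theorem (Class 1).
Let `F` be a power series with constant term 1 satisfying `F = 1 + B(z)F + A(z)F²`,
with `A(z) = Σ_{i∈A} a_i z^i`, `B(z) = Σ_{i∈B} b_i z^i` (zero constant term, i.e. all
indices positive). Let `G` be the reciprocal of
`1 − B(yz) − A(yz)·F(yz) − (A(yz)/y)·F(z)` and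
`P = 1 + Σ_{i∈B} b_i z^i (1+⋯+y^{i-1})·F(z) + Σ_{i∈A} a_i z^i (1+⋯+y^{i-2})·F(z)²`.
Then `G·P = (y·F(yz) − F(z))/(y−1) = Σ_n f_n z^n (1+y+⋯+y^n)`. -/
theorem dyck_type_algebraic_core {R : Type*} [CommRing R] (A B : Finset ℕ)
    (hA : ∀ i ∈ A, 0 < i) (hB : ∀ i ∈ B, 0 < i) (a b : ℕ → R)
    (F : PowerSeries R) (hF0 : PowerSeries.constantCoeff (R := R) F = 1)
    (hF : F = 1 + (∑ i ∈ B, PowerSeries.C (R := R) (b i) * PowerSeries.X ^ i) * F +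
               (∑ i ∈ A, PowerSeries.C (R := R) (a i) * PowerSeries.X ^ i) * F ^ 2)
    (G : PowerSeries (Polynomial R))
    (hG : G * (1 - (∑ i ∈ B, PowerSeries.C (R := Polynomial R)
                      (Polynomial.C (b i) * Polynomial.X ^ i) * PowerSeries.X ^ i)
                 - (∑ i ∈ A, PowerSeries.C (R := Polynomial R)
                      (Polynomial.C (a i) * Polynomial.X ^ i) * PowerSeries.X ^ i) *
                     (PowerSeries.mk fun n =>
                       Polynomial.C (PowerSeries.coeff (R := R) n F) * Polynomial.X ^ n)
                 - (∑ i ∈ A, PowerSeries.C (R := Polynomial R)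
                      (Polynomial.C (a i) * Polynomial.X ^ (i - 1)) * PowerSeries.X ^ i) *
                     (PowerSeries.mk fun n =>
                       Polynomial.C (PowerSeries.coeff (R := R) n F))) = 1) :
    G * (1 + (∑ i ∈ B, PowerSeries.C (R := Polynomial R)
                (Polynomial.C (b i) * ∑ j ∈ Finset.range i, Polynomial.X ^ j) *
                PowerSeries.X ^ i) *
              (PowerSeries.mk fun n => Polynomial.C (PowerSeries.coeff (R := R) n F)) +
            (∑ i ∈ A, PowerSeries.C (R := Polynomial R)
                (Polynomial.C (a i) * ∑ j ∈ Finset.range (i - 1), Polynomial.X ^ j) *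
                PowerSeries.X ^ i) *
              (PowerSeries.mk fun n => Polynomial.C (PowerSeries.coeff (R := R) n F)) ^ 2) =
    PowerSeries.mk fun n =>
      Polynomial.C (PowerSeries.coeff (R := R) n F) * ∑ j ∈ Finset.range (n + 1), Polynomial.X ^ j := by
  set F0 : PowerSeries (Polynomial R) :=
    PowerSeries.mk fun n => Polynomial.C (PowerSeries.coeff (R := R) n F) with hF0def
  set Ft : PowerSeries (Polynomial R) :=
    PowerSeries.mk fun n => Polynomial.C (PowerSeries.coeff (R := R) n F) * Polynomial.X ^ n with hFtdef
  set T : PowerSeries (Polynomial R) :=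
    PowerSeries.mk fun n =>
      Polynomial.C (PowerSeries.coeff (R := R) n F) * ∑ j ∈ Finset.range (n + 1), Polynomial.X ^ j
    with hTdef
  set Bt := ∑ i ∈ B, PowerSeries.C (R := Polynomial R)
      (Polynomial.C (b i) * Polynomial.X ^ i) * PowerSeries.X ^ i with hBtdef
  set At := ∑ i ∈ A, PowerSeries.C (R := Polynomial R)
      (Polynomial.C (a i) * Polynomial.X ^ i) * PowerSeries.X ^ i with hAtdef
  set At' := ∑ i ∈ A, PowerSeries.C (R := Polynomial R)
      (Polynomial.C (a i) * Polynomial.X ^ (i - 1)) * PowerSeries.X ^ i with hAt'def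
  set B0 := ∑ i ∈ B, PowerSeries.C (R := Polynomial R)
      (Polynomial.C (b i)) * PowerSeries.X ^ i with hB0def
  set A0 := ∑ i ∈ A, PowerSeries.C (R := Polynomial R)
      (Polynomial.C (a i)) * PowerSeries.X ^ i with hA0def
  set Bbar := ∑ i ∈ B, PowerSeries.C (R := Polynomial R)
      (Polynomial.C (b i) * ∑ j ∈ Finset.range i, Polynomial.X ^ j) * PowerSeries.X ^ i
    with hBbardef
  set Abar := ∑ i ∈ A, PowerSeries.C (R := Polynomial R)
      (Polynomial.C (a i) * ∑ j ∈ Finset.range (i - 1), Polynomial.X ^ j) * PowerSeries.X ^ i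
    with hAbardef
  set y := PowerSeries.C (R := Polynomial R) (Polynomial.X) with hydef
  have hF0map : F0 = PowerSeries.map Polynomial.C F := by
    apply PowerSeries.ext
    intro n
    rw [hF0def, PowerSeries.coeff_mk, PowerSeries.coeff_map]
  have hFtmap : Ft = PowerSeries.rescale Polynomial.X (PowerSeries.map Polynomial.C F) := by
    apply PowerSeries.ext
    intro n
    rw [hFtdef, PowerSeries.coeff_mk, PowerSeries.coeff_rescale, PowerSeries.coeff_map, mul_comm]
  have hF0eq : F0 = 1 + B0 * F0 + A0 * F0 ^ 2 := by
    rw [hF0map]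
    conv_lhs => rw [hF]
    simp only [map_add, map_mul, map_pow, map_one, map_sum, PowerSeries.map_C,
      PowerSeries.map_X]
    rfl
  have hFteq : Ft = 1 + Bt * Ft + At * Ft ^ 2 := by
    rw [hFtmap]
    conv_lhs => rw [hF]
    simp only [map_add, map_mul, map_pow, map_one, map_sum, PowerSeries.map_C,
      PowerSeries.map_X, rescale_C_poly, PowerSeries.rescale_X]
    rw [← hFtmap]
    have hBsum : (∑ i ∈ B, PowerSeries.C (R := Polynomial R) (Polynomial.C (b i)) *
        (PowerSeries.C (R := Polynomial R) Polynomial.X * PowerSeries.X) ^ i) = Bt := by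
      rw [hBtdef]
      refine Finset.sum_congr rfl fun i hi => ?_
      rw [mul_pow, ← map_pow, ← mul_assoc, ← map_mul]
    have hAsum : (∑ i ∈ A, PowerSeries.C (R := Polynomial R) (Polynomial.C (a i)) *
        (PowerSeries.C (R := Polynomial R) Polynomial.X * PowerSeries.X) ^ i) = At := by
      rw [hAtdef]
      refine Finset.sum_congr rfl fun i hi => ?_
      rw [mul_pow, ← map_pow, ← mul_assoc, ← map_mul]
    rw [hBsum, hAsum]
  have hA3 : At = y * At' := by
    rw [hAtdef, hAt'def, Finset.mul_sum]
    refine Finset.sum_congr rfl fun i hi => ?_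
    rw [hydef, ← mul_assoc, ← map_mul]
    congr 2
    have hx : Polynomial.X ^ i = Polynomial.X ^ (i - 1) * (Polynomial.X : Polynomial R) := by
      rw [← pow_succ]
      congr 1
      have := hA i hi
      omega
    linear_combination Polynomial.C (a i) * hx
  have hy1 : PowerSeries.C (R := Polynomial R) (Polynomial.X - 1) = y - 1 := by
    rw [hydef, map_sub, map_one]
  have hBgeom : (y - 1) * Bbar = Bt - B0 := by
    rw [← hy1, hBbardef, hBtdef, hB0def, Finset.mul_sum, ← Finset.sum_sub_distrib]
    refine Finset.sum_congr rfl fun i hi => ?_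
    rw [← sub_mul, ← map_sub, ← mul_assoc, ← map_mul]
    congr 2
    linear_combination Polynomial.C (b i) * geom_sum_mul (Polynomial.X : Polynomial R) i
  have hAgeom : (y - 1) * Abar = At' - A0 := by
    rw [← hy1, hAbardef, hAt'def, hA0def, Finset.mul_sum, ← Finset.sum_sub_distrib]
    refine Finset.sum_congr rfl fun i hi => ?_
    rw [← sub_mul, ← map_sub, ← mul_assoc, ← map_mul]
    congr 2
    linear_combination Polynomial.C (a i) * geom_sum_mul (Polynomial.X : Polynomial R) (i - 1)
  have hT : PowerSeries.C (R := Polynomial R) (Polynomial.X - 1) * T = y * Ft - F0 := by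
    rw [eq_sub_iff_add_eq, hTdef, hydef, hFtdef, hF0def]
    apply PowerSeries.ext
    intro n
    rw [map_add, PowerSeries.coeff_C_mul, PowerSeries.coeff_C_mul, PowerSeries.coeff_mk,
      PowerSeries.coeff_mk, PowerSeries.coeff_mk]
    linear_combination Polynomial.C (PowerSeries.coeff (R := R) n F) *
      geom_sum_mul (Polynomial.X : Polynomial R) (n + 1)
  have key : (1 - Bt - At * Ft - At' * F0) * T = 1 + Bbar * F0 + Abar * F0 ^ 2 := by
    apply cancel_Xsub1
    calc PowerSeries.C (R := Polynomial R) (Polynomial.X - 1) * ((1 - Bt - At * Ft - At' * F0) * T)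
        = (1 - Bt - At * Ft - At' * F0) *
            (PowerSeries.C (R := Polynomial R) (Polynomial.X - 1) * T) := by ring
      _ = (1 - Bt - At * Ft - At' * F0) * (y * Ft - F0) := by rw [hT]
      _ = PowerSeries.C (R := Polynomial R) (Polynomial.X - 1) *
            (1 + Bbar * F0 + Abar * F0 ^ 2) := by
          rw [hy1]
          linear_combination y * hFteq - hF0eq + Ft * F0 * hA3 - F0 * hBgeom - F0 ^ 2 * hAgeom
  rw [← key, ← mul_assoc, hG, one_mul]
end

section
/- For Class 1 paths (steps (1,1) weight 1 length 1; (2i,0) weight b_i length i for i∈B; (2i-1,-1) weight a_i length i-1 for i∈A): for all 0 ≤ m ≤ n, the total weight of pointed paths from (0,0) to the line y=1 with total length n+1, non-positive pointed length m, and last step of length ≥ 1, equals the total weight f_n of nonnegative paths of length n ending on the x-axis. -/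
/-- Abstract steps: `up` is `(1,1)`, `flat i` is `(2i,0)` and `down i` is `(2i-1,-1)`. -/
inductive Step where
  | up : Step
  | flat : ℕ → Step
  | down : ℕ → Step

/-- Height change of a step. -/
def dh : Step → ℤ
  | .up => 1
  | .flat _ => 0
  | .down _ => -1

/-- Length of a step (Class 1). -/
def len : Step → ℕ
  | .up => 1
  | .flat i => i
  | .down i => i - 1

/-- A step is allowed: flat steps are indexed by `B`, down steps by `A`. -/
def Valid (A B : Finset ℕ) : Step → Prop
  | .up => True
  | .flat i => i ∈ B
  | .down i => i ∈ A

/-- Weight of a step. -/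
def wt {R : Type*} [CommRing R] (a b : ℕ → R) : Step → R
  | .up => 1
  | .flat i => b i
  | .down i => a i

/-- Weight of a path. -/
def pathWt {R : Type*} [CommRing R] (a b : ℕ → R) (L : List Step) : R :=
  (L.map (wt a b)).prod

/-- Length of a path. -/
def pathLen (L : List Step) : ℕ := (L.map len).sum

/-- A nonnegative path: ends on the x-axis and never goes below it. -/
def Nonneg (L : List Step) : Prop :=
  (L.map dh).sum = 0 ∧ ∀ h ∈ (L.map dh).scanl (· + ·) 0, 0 ≤ h

/-- The non-positive length `\bar l(L)`: the sum of the lengths of the steps of `L`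
whose ending height is `≤ 0`. -/
def npLen (L : List Step) : ℕ :=
  (((L.zip (((L.map dh).scanl (· + ·) 0).tail)).filter
    (fun p => decide (p.2 ≤ 0))).map (fun p => len p.1)).sum


namespace CF
open List

lemma dh_le_one (s : Step) : dh s ≤ 1 := by cases s <;> simp [dh]
lemma dh_eq_one {s : Step} (h : dh s = 1) : s = Step.up := by cases s <;> simp_all [dh]

def sdh (w : List Step) : ℤ := (w.map dh).sum
def hgt (w : List Step) (i : ℕ) : ℤ := sdh (w.take i)

@[simp] lemma sdh_nil : sdh [] = 0 := rfl
@[simp] lemma sdh_cons (s w) : sdh (s::w) = dh s + sdh w := by simp [sdh]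
@[simp] lemma sdh_append (A B₁ : List Step) : sdh (A++B₁) = sdh A + sdh B₁ := by simp [sdh]

@[simp] lemma hgt_zero (w) : hgt w 0 = 0 := rfl
@[simp] lemma hgt_nil (i) : hgt [] i = 0 := by simp [hgt, sdh]
lemma hgt_length (w) : hgt w w.length = sdh w := by simp [hgt]
lemma hgt_of_le (w) {i} (h : w.length ≤ i) : hgt w i = sdh w := by
  simp [hgt, List.take_of_length_le h]
lemma hgt_cons_succ (s w i) : hgt (s::w) (i+1) = dh s + hgt w i := by simp [hgt]

@[simp] lemma pathLen_nil : pathLen ([] : List Step) = 0 := rfl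
@[simp] lemma pathLen_cons (s w) : pathLen (s::w) = len s + pathLen w := by simp [pathLen]
@[simp] lemma pathLen_append (A B₁ : List Step) : pathLen (A++B₁) = pathLen A + pathLen B₁ := by
  simp [pathLen]

def npAux : ℤ → List Step → ℕ
  | _, [] => 0
  | c, s :: L => (if c + dh s ≤ 0 then len s else 0) + npAux (c + dh s) L

@[simp] lemma npAux_nil (c) : npAux c [] = 0 := rfl
@[simp] lemma npAux_cons (c s L) :
    npAux c (s::L) = (if c + dh s ≤ 0 then len s else 0) + npAux (c + dh s) L := rfl

lemma npAux_append (A B₁ : List Step) (c : ℤ) :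
    npAux c (A ++ B₁) = npAux c A + npAux (c + sdh A) B₁ := by
  induction A generalizing c with
  | nil => simp
  | cons s A ih => simp [ih, add_assoc]

lemma npAux_anti (L : List Step) : ∀ {c c' : ℤ}, c ≤ c' → npAux c' L ≤ npAux c L := by
  induction L with
  | nil => simp
  | cons s L ih =>
    intro c c' h
    have h2 := ih (show c + dh s ≤ c' + dh s by linarith)
    have h1 : (if c' + dh s ≤ 0 then len s else 0) ≤ (if c + dh s ≤ 0 then len s else 0) := by
      split_ifs <;> omega
    simpa using Nat.add_le_add h1 h2

lemma npAux_le (L : List Step) : ∀ c, npAux c L ≤ pathLen L := by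
  induction L with
  | nil => simp
  | cons s L ih =>
    intro c
    have := ih (c + dh s)
    have h1 : (if c + dh s ≤ 0 then len s else 0) ≤ len s := by split_ifs <;> omega
    simp only [npAux_cons, pathLen_cons]
    omega

lemma scanl_cons_tail (b : ℤ) (l : List ℤ) :
    List.scanl (· + ·) b l = b :: (List.scanl (· + ·) b l).tail := by
  cases l <;> simp [List.scanl]

lemma npLen_aux (L : List Step) : ∀ c : ℤ,
    (((L.zip (((L.map dh).scanl (· + ·) c)).tail).filter
      (fun p => decide (p.2 ≤ 0))).map (fun p => len p.1)).sum = npAux c L := by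
  induction L with
  | nil => intro c; simp
  | cons s L ih =>
    intro c
    rw [List.map_cons, List.scanl_cons, List.tail_cons,
      scanl_cons_tail (c + dh s)]
    rw [List.zip_cons_cons, List.filter_cons]
    by_cases h : c + dh s ≤ 0 <;> simp [h, ih]

lemma npLen_eq (L : List Step) : npLen L = npAux 0 L := by
  exact npLen_aux L 0


def rotAt (c : ℕ) (w : List Step) : List Step := w.drop c ++ w.take c

lemma sdh_rotAt (c w) : sdh (rotAt c w) = sdh w := by
  rw [rotAt, sdh_append, add_comm, ← sdh_append, List.take_append_drop]

lemma pathLen_rotAt (c w) : pathLen (rotAt c w) = pathLen w := by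
  rw [rotAt, pathLen_append, add_comm, ← pathLen_append, List.take_append_drop]

lemma pathWt_append {R : Type*} [CommRing R] (a b : ℕ → R) (A B₁ : List Step) :
    pathWt a b (A ++ B₁) = pathWt a b A * pathWt a b B₁ := by simp [pathWt]

lemma pathWt_rotAt {R : Type*} [CommRing R] (a b : ℕ → R) (c w) :
    pathWt a b (rotAt c w) = pathWt a b w := by
  rw [rotAt, pathWt_append, mul_comm, ← pathWt_append, List.take_append_drop]

lemma mem_rotAt {s : Step} {c w} : s ∈ rotAt c w ↔ s ∈ w := by
  constructor
  · intro h
    rcases List.mem_append.1 h with h | h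
    · exact List.mem_of_mem_drop h
    · exact List.mem_of_mem_take h
  · intro h
    conv at h => rw [← List.take_append_drop c w]
    rcases List.mem_append.1 h with h | h
    · exact List.mem_append.2 (Or.inr h)
    · exact List.mem_append.2 (Or.inl h)

def elt (w : List Step) (k : ℕ) : Step := w.getD k Step.up

@[simp] lemma elt_cons_zero (s w) : elt (s::w) 0 = s := rfl
@[simp] lemma elt_cons_succ (s w k) : elt (s::w) (k+1) = elt w k := rfl

lemma take_succ_elt {w : List Step} {k : ℕ} (h : k < w.length) :
    w.take (k+1) = w.take k ++ [elt w k] := by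
  rw [List.take_succ]
  congr 1
  rw [List.getElem?_eq_getElem h]
  simp [elt, List.getD_eq_getElem?_getD, List.getElem?_eq_getElem h]

lemma getLast?_rotAt {w : List Step} {k : ℕ} (h : k < w.length) :
    (rotAt (k+1) w).getLast? = some (elt w k) := by
  rw [rotAt, take_succ_elt h, ← List.append_assoc, List.getLast?_concat]

lemma length_rotAt (c w) : (rotAt c w).length = w.length := by
  simp [rotAt]
  omega

lemma npAux_concat (c : ℤ) (A : List Step) (t : Step) :
    npAux c (A ++ [t]) = npAux c A + (if c + sdh A + dh t ≤ 0 then len t else 0) := by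
  rw [npAux_append]; simp

lemma pathLen_eq_sum (w : List Step) :
    pathLen w = ∑ k ∈ Finset.range w.length, len (elt w k) := by
  induction w with
  | nil => simp
  | cons s w ih =>
    rw [pathLen_cons, ih, List.length_cons, Finset.sum_range_succ']
    simp [add_comm]

lemma phi_bound {w : List Step} (hw : sdh w = 1) {k j : ℕ} (hk : k < w.length)
    (hj : j < len (elt w k)) : npLen (rotAt (k+1) w) + j < pathLen w := by
  have e1 : w.take (k+1) = w.take k ++ [elt w k] := take_succ_elt hk
  have hsum : sdh (w.drop (k+1)) + (sdh (w.take k) + dh (elt w k)) = 1 := by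
    have h2 : sdh (w.take (k+1)) + sdh (w.drop (k+1)) = 1 := by
      rw [← sdh_append, List.take_append_drop]; exact hw
    rw [e1] at h2; simp at h2; linarith
  rw [npLen_eq, rotAt, npAux_append, zero_add, e1, npAux_concat,
    if_neg (by linarith : ¬ (sdh (w.drop (k+1)) + sdh (w.take k) + dh (elt w k) ≤ 0))]
  have b1 := npAux_le (w.drop (k+1)) 0
  have b2 := npAux_le (w.take k) (sdh (w.drop (k+1)))
  have b3 : pathLen w = pathLen (w.take k) + len (elt w k) + pathLen (w.drop (k+1)) := by
    conv_lhs => rw [← List.take_append_drop (k+1) w]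
    rw [pathLen_append, e1, pathLen_append]
    simp
  omega

lemma phi_ne {w : List Step} (hw : sdh w = 1) {k k' j j' : ℕ} (hkk : k < k')
    (hk' : k' < w.length) (hj : j < len (elt w k)) (hj' : j' < len (elt w k')) :
    npLen (rotAt (k+1) w) + j ≠ npLen (rotAt (k'+1) w) + j' := by
  have hk : k < w.length := hkk.trans hk'
  set X := w.take (k+1) with hX
  set Y := (w.take (k'+1)).drop (k+1) with hY
  set Z := w.drop (k'+1) with hZ
  have hXY : X ++ Y = w.take (k'+1) := by
    have h1 : X = (w.take (k'+1)).take (k+1) := by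
      rw [hX, List.take_take]; congr 1; omega
    rw [h1, hY, List.take_append_drop]
  have hYZ : Y ++ Z = w.drop (k+1) := by
    conv_rhs => rw [← List.take_append_drop (k'+1) w,
      List.drop_append_of_le_length (by rw [List.length_take]; omega)]
  have hw3 : sdh X + sdh Y + sdh Z = 1 := by
    have h1 : sdh (X ++ Y) + sdh Z = 1 := by
      rw [hXY, hZ, ← sdh_append, List.take_append_drop]; exact hw
    rw [sdh_append] at h1; linarith
  have hXs : X = w.take k ++ [elt w k] := take_succ_elt hk
  have hYs : Y = (w.take k').drop (k+1) ++ [elt w k'] := by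
    rw [hY, take_succ_elt hk',
      List.drop_append_of_le_length (by rw [List.length_take]; omega)]
  set x := sdh X with hxd
  set y := sdh Y with hyd
  set z := sdh Z with hzd
  have eL : npLen (rotAt (k+1) w) = npAux 0 Y + npAux y Z + npAux (y + z) X := by
    rw [npLen_eq, rotAt, ← hYZ, ← hX, List.append_assoc, npAux_append, npAux_append,
      ← hyd, ← hzd, zero_add, add_assoc]
  have eR : npLen (rotAt (k'+1) w) = npAux 0 Z + npAux z X + npAux (z + x) Y := by
    rw [npLen_eq, rotAt, ← hXY, ← hZ, npAux_append, npAux_append, ← hzd, ← hxd, zero_add,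
      add_assoc]
  have cX : ∀ c : ℤ, npAux c X = npAux c (w.take k) +
      (if c + x ≤ 0 then len (elt w k) else 0) := by
    intro c
    have hx2 : sdh (w.take k) + dh (elt w k) = x := by rw [hxd, hXs]; simp
    rw [hXs, npAux_concat, add_assoc, hx2]
  have cY : ∀ c : ℤ, npAux c Y = npAux c ((w.take k').drop (k+1)) +
      (if c + y ≤ 0 then len (elt w k') else 0) := by
    intro c
    have hy2 : sdh ((w.take k').drop (k+1)) + dh (elt w k') = y := by rw [hyd, hYs]; simp
    rw [hYs, npAux_concat, add_assoc, hy2]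
  rcases le_or_gt y 0 with hy | hy
  · have i1 : npAux 0 Z ≤ npAux y Z := npAux_anti Z hy
    have i2 : npAux z X ≤ npAux (y+z) X := npAux_anti X (by linarith)
    have i3 : npAux (z+x) Y + len (elt w k') ≤ npAux 0 Y := by
      rw [cY (z+x), cY 0]
      rw [if_neg (by linarith : ¬ (z + x + y ≤ 0)), if_pos (by linarith : (0:ℤ) + y ≤ 0)]
      have := npAux_anti ((w.take k').drop (k+1)) (show (0:ℤ) ≤ z + x by linarith)
      omega
    intro hEq
    rw [eL, eR] at hEq
    omega
  · have i1 : npAux y Z ≤ npAux 0 Z := npAux_anti Z (by linarith)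
    have i2 : npAux 0 Y ≤ npAux (z+x) Y := npAux_anti Y (by linarith)
    have i3 : npAux (y+z) X + len (elt w k) ≤ npAux z X := by
      rw [cX (y+z), cX z]
      rw [if_neg (by linarith : ¬ (y + z + x ≤ 0)), if_pos (by linarith : z + x ≤ 0)]
      have := npAux_anti (w.take k) (show z ≤ y + z by linarith)
      omega
    intro hEq
    rw [eL, eR] at hEq
    omega

lemma phi_inj {w : List Step} (hw : sdh w = 1) {k k' j j' : ℕ} (hk : k < w.length)
    (hk' : k' < w.length) (hj : j < len (elt w k)) (hj' : j' < len (elt w k'))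
    (h : npLen (rotAt (k+1) w) + j = npLen (rotAt (k'+1) w) + j') : k = k' ∧ j = j' := by
  rcases lt_trichotomy k k' with hlt | heq | hgt
  · exact absurd h (phi_ne hw hlt hk' hj hj')
  · subst heq; exact ⟨rfl, by omega⟩
  · exact absurd h.symm (phi_ne hw hgt hk hj' hj)

lemma cut_exists {w : List Step} (hw : sdh w = 1) {m : ℕ} (hm : m < pathLen w) :
    ∃ k, k < w.length ∧ ∃ j, j < len (elt w k) ∧ npLen (rotAt (k+1) w) + j = m := by
  classical
  set s : Finset ((_ : ℕ) × ℕ) :=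
    (Finset.range w.length).sigma (fun k => Finset.range (len (elt w k))) with hs
  set t : Finset ℕ := Finset.range (pathLen w) with ht
  have key := Finset.surj_on_of_inj_on_of_card_le
    (s := s) (t := t)
    (fun (p : (_ : ℕ) × ℕ) (_ : p ∈ s) => npLen (rotAt (p.1+1) w) + p.2)
    (fun p hp => by
      rw [hs, Finset.mem_sigma] at hp
      exact Finset.mem_range.2 (phi_bound hw (Finset.mem_range.1 hp.1)
        (Finset.mem_range.1 hp.2)))
    (fun p q hp hq hpq => by
      rw [hs, Finset.mem_sigma] at hp hq
      obtain ⟨h1, h2⟩ := phi_inj hw (Finset.mem_range.1 hp.1) (Finset.mem_range.1 hq.1)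
        (Finset.mem_range.1 hp.2) (Finset.mem_range.1 hq.2) hpq
      exact Sigma.ext h1 (heq_of_eq h2))
    (by
      rw [hs, ht, Finset.card_sigma]
      simp only [Finset.card_range]
      rw [← pathLen_eq_sum])
  obtain ⟨p, hp, hfp⟩ := key m (Finset.mem_range.2 hm)
  rw [hs, Finset.mem_sigma] at hp
  exact ⟨p.1, Finset.mem_range.1 hp.1, p.2, Finset.mem_range.1 hp.2, hfp.symm⟩

lemma hgt_take {w : List Step} {c i : ℕ} (h : i ≤ c) : hgt (w.take c) i = hgt w i := by
  unfold hgt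
  rw [List.take_take, Nat.min_eq_left h]

lemma hgt_drop (w : List Step) (c i : ℕ) :
    hgt (w.drop c) i = hgt w (c + i) - hgt w c := by
  have h : w.take (c + i) = w.take c ++ (w.drop c).take i := List.take_add
  unfold hgt
  rw [h, sdh_append]
  ring

lemma hgt_append_left {A B₁ : List Step} {i : ℕ} (h : i ≤ A.length) :
    hgt (A ++ B₁) i = hgt A i := by
  unfold hgt
  rw [List.take_append_of_le_length h]

lemma hgt_append_right {A B₁ : List Step} {i : ℕ} (h : A.length ≤ i) :
    hgt (A ++ B₁) i = sdh A + hgt B₁ (i - A.length) := by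
  unfold hgt
  have : i = A.length + (i - A.length) := by omega
  rw [this, List.take_append, sdh_append]
  simp [List.take_of_length_le]

noncomputable def minH (w : List Step) : ℤ :=
  (Finset.range (w.length+1)).inf' (by simp) (hgt w)

lemma minS_nonempty (w : List Step) :
    ((Finset.range (w.length+1)).filter (fun i => hgt w i = minH w)).Nonempty := by
  obtain ⟨i, hi, he⟩ := Finset.exists_mem_eq_inf'
    (show (Finset.range (w.length+1)).Nonempty by simp) (hgt w)
  exact ⟨i, Finset.mem_filter.2 ⟨hi, he.symm⟩⟩

noncomputable def argmin (w : List Step) : ℕ :=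
  ((Finset.range (w.length+1)).filter (fun i => hgt w i = minH w)).max' (minS_nonempty w)

noncomputable def canon (w : List Step) : List Step := rotAt (argmin w + 1) w

lemma minH_le {w : List Step} {i : ℕ} (h : i ≤ w.length) : minH w ≤ hgt w i :=
  Finset.inf'_le _ (Finset.mem_range.2 (by omega))

lemma argmin_le (w : List Step) : argmin w ≤ w.length := by
  unfold argmin
  have := ((Finset.range (w.length+1)).filter (fun i => hgt w i = minH w)).max'_mem
    (minS_nonempty w)
  rw [Finset.mem_filter, Finset.mem_range] at this
  omega

lemma hgt_argmin (w : List Step) : hgt w (argmin w) = minH w := by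
  unfold argmin
  have := ((Finset.range (w.length+1)).filter (fun i => hgt w i = minH w)).max'_mem
    (minS_nonempty w)
  rw [Finset.mem_filter] at this
  exact this.2

lemma argmin_max {w : List Step} {i : ℕ} (h : i ≤ w.length) (he : hgt w i = minH w) :
    i ≤ argmin w := by
  unfold argmin
  exact Finset.le_max' _ i (Finset.mem_filter.2 ⟨Finset.mem_range.2 (by omega), he⟩)

lemma minH_nonpos (w : List Step) : minH w ≤ 0 := by
  simpa using minH_le (show 0 ≤ w.length by omega)

lemma argmin_lt {w : List Step} (hw : sdh w = 1) : argmin w < w.length := by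
  have h1 := argmin_le w
  rcases Nat.lt_or_ge (argmin w) w.length with h | h
  · exact h
  · exfalso
    have h2 : argmin w = w.length := by omega
    have h3 := hgt_argmin w
    rw [h2, hgt_length, hw] at h3
    have := minH_nonpos w
    omega

lemma hgt_succ {w : List Step} {k : ℕ} (hk : k < w.length) :
    hgt w (k+1) = hgt w k + dh (elt w k) := by
  unfold hgt
  rw [take_succ_elt hk, sdh_append]
  simp

lemma elt_argmin_up {w : List Step} (hw : sdh w = 1) :
    elt w (argmin w) = Step.up ∧ hgt w (argmin w + 1) = minH w + 1 := by
  have hk := argmin_lt hw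
  have h1 : hgt w (argmin w + 1) = minH w + dh (elt w (argmin w)) := by
    rw [hgt_succ hk, hgt_argmin]
  have h2 : minH w ≤ hgt w (argmin w + 1) := minH_le (by omega)
  have h3 : hgt w (argmin w + 1) ≠ minH w := by
    intro hc
    have := argmin_max (show argmin w + 1 ≤ w.length by omega) hc
    omega
  have h4 := dh_le_one (elt w (argmin w))
  have h5 : dh (elt w (argmin w)) = 1 := by omega
  exact ⟨dh_eq_one h5, by rw [h1, h5]⟩

lemma canon_concat {w : List Step} (hw : sdh w = 1) :
    canon w = (w.drop (argmin w + 1) ++ w.take (argmin w)) ++ [Step.up] := by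
  rw [canon, rotAt, take_succ_elt (argmin_lt hw), (elt_argmin_up hw).1, List.append_assoc]

lemma dropLast_canon {w : List Step} (hw : sdh w = 1) :
    (canon w).dropLast = w.drop (argmin w + 1) ++ w.take (argmin w) := by
  rw [canon_concat hw, List.dropLast_concat]

lemma argmin_le' {w : List Step} {N : ℕ}
    (h : ∀ i, i ≤ w.length → hgt w i = minH w → i ≤ N) : argmin w ≤ N := by
  unfold argmin
  apply Finset.max'_le
  intro i hi
  rw [Finset.mem_filter, Finset.mem_range] at hi
  exact h i (by omega) hi.2

lemma sdh_drop (w : List Step) (c : ℕ) : sdh (w.drop c) = sdh w - hgt w c := by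
  have h : sdh (w.take c) + sdh (w.drop c) = sdh w := by
    rw [← sdh_append, List.take_append_drop]
  have h2 : hgt w c = sdh (w.take c) := rfl
  linarith

lemma mem_scanl_iff {L : List Step} : ∀ {c x : ℤ},
    (x ∈ (L.map dh).scanl (· + ·) c ↔ ∃ i, i ≤ L.length ∧ x = c + hgt L i) := by
  induction L with
  | nil =>
    intro c x
    simp only [List.map_nil, List.scanl_nil, List.mem_singleton, List.length_nil]
    constructor
    · intro h; exact ⟨0, le_refl 0, by simpa using h⟩
    · rintro ⟨i, hi, he⟩
      have : i = 0 := by omega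
      subst this; simpa using he
  | cons s L ih =>
    intro c x
    simp only [List.map_cons, List.scanl_cons, List.singleton_append, List.mem_cons]
    constructor
    · intro h
      rcases h with h | h
      · exact ⟨0, by omega, by simpa using h⟩
      · obtain ⟨i, hi, he⟩ := ih.1 h
        refine ⟨i+1, by simpa using hi, ?_⟩
        rw [hgt_cons_succ]; omega
    · rintro ⟨i, hi, he⟩
      cases i with
      | zero => left; simpa using he
      | succ i =>
        right
        refine ih.2 ⟨i, by simpa using hi, ?_⟩
        rw [hgt_cons_succ] at he; omega

lemma nonneg_iff {L : List Step} :
    Nonneg L ↔ sdh L = 0 ∧ ∀ i, i ≤ L.length → 0 ≤ hgt L i := by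
  unfold Nonneg
  constructor
  · rintro ⟨h1, h2⟩
    refine ⟨h1, fun i hi => ?_⟩
    have := h2 (0 + hgt L i) (mem_scanl_iff.2 ⟨i, hi, rfl⟩)
    simpa using this
  · rintro ⟨h1, h2⟩
    refine ⟨h1, fun x hx => ?_⟩
    obtain ⟨i, hi, he⟩ := mem_scanl_iff.1 hx
    rw [he]
    simpa using h2 i hi

lemma nonneg_dropLast_canon {w : List Step} (hw : sdh w = 1) :
    Nonneg ((canon w).dropLast) := by
  rw [dropLast_canon hw, nonneg_iff]
  have hk : argmin w < w.length := argmin_lt hw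
  have hup := (elt_argmin_up hw).2
  have hdl : (w.drop (argmin w + 1)).length = w.length - (argmin w + 1) := by simp
  have hmin : hgt w (argmin w) = minH w := hgt_argmin w
  have hsA : sdh (w.drop (argmin w + 1)) = - minH w := by
    rw [sdh_drop, hw, hup]; ring
  constructor
  · rw [sdh_append, hsA]
    have : sdh (w.take (argmin w)) = hgt w (argmin w) := rfl
    rw [this, hmin]; ring
  · intro i hi
    by_cases h : i ≤ (w.drop (argmin w + 1)).length
    · rw [hgt_append_left h, hgt_drop, hup]
      have h1 : minH w ≤ hgt w (argmin w + 1 + i) := minH_le (by omega)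
      have h2 : hgt w (argmin w + 1 + i) ≠ minH w := by
        intro hc
        have := argmin_max (show argmin w + 1 + i ≤ w.length by omega) hc
        omega
      omega
    · rw [hgt_append_right (by omega), hsA]
      have hlt : (w.take (argmin w)).length = argmin w := by simp; omega
      have h3 : i - (w.drop (argmin w + 1)).length ≤ argmin w := by
        rw [List.length_append, hlt] at hi
        omega
      rw [hgt_take h3]
      have := minH_le (show i - (w.drop (argmin w + 1)).length ≤ w.length by omega)
      omega

lemma rot_canon {w : List Step} (hw : sdh w = 1) :
    ∃ k, k < w.length ∧ rotAt (k+1) (canon w) = w := by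
  have hk : argmin w < w.length := argmin_lt hw
  by_cases hcase : argmin w = w.length - 1
  · refine ⟨w.length - 1, by omega, ?_⟩
    have hD : w.drop (argmin w + 1) = [] := by
      rw [List.drop_eq_nil_iff]
      omega
    have hT : w.take (argmin w + 1) = w := List.take_of_length_le (by omega)
    have hcw : canon w = w := by rw [canon, rotAt, hD, hT]; simp
    rw [hcw, rotAt]
    have h1 : w.length - 1 + 1 = w.length := by omega
    rw [h1]
    simp [List.drop_of_length_le, List.take_of_length_le]
  · refine ⟨w.length - argmin w - 2, by omega, ?_⟩
    have h1 : w.length - argmin w - 2 + 1 = (w.drop (argmin w + 1)).length := by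
      simp; omega
    rw [canon, rotAt, h1, rotAt, List.drop_left, List.take_left, List.take_append_drop]

lemma canon_rotAt {w : List Step} (hw : sdh w = 1)
    (hpos : ∀ i, i ≤ w.length → 0 ≤ hgt w i)
    (hlast : hgt w (w.length - 1) = 0) (hr : 1 ≤ w.length)
    {c : ℕ} (hc1 : 1 ≤ c) (hc2 : c ≤ w.length) :
    canon (rotAt c w) = w := by
  set w' := rotAt c w with hw'
  have hlen' : w'.length = w.length := length_rotAt c w
  have hdl : (w.drop c).length = w.length - c := by simp
  by_cases hcr : c = w.length
  · subst hcr
    have hrw : w' = w := by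
      rw [hw', rotAt]
      simp [List.drop_of_length_le, List.take_of_length_le]
    rw [hrw]
    have hmin0 : minH w = 0 := by
      apply _root_.le_antisymm
      · simpa using minH_le (show 0 ≤ w.length by omega)
      · apply Finset.le_inf'
        intro i hi
        rw [Finset.mem_range] at hi
        exact hpos i (by omega)
    have harg : argmin w = w.length - 1 := by
      apply _root_.le_antisymm
      · apply argmin_le'
        intro i hi he
        by_contra hL
        push_neg at hL
        have h9 : i = w.length := by omega
        rw [h9, hgt_length, hw, hmin0] at he
        norm_num at he
      · exact argmin_max (by omega) (by rw [hlast, hmin0])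
    rw [canon, harg]
    have h1 : w.length - 1 + 1 = w.length := by omega
    rw [h1, rotAt]
    simp [List.drop_of_length_le, List.take_of_length_le]
  have hcc : c ≤ w.length - 1 := by omega
  have hgt' : ∀ i, i ≤ w.length → hgt w' i =
      (if i ≤ w.length - c then hgt w (c+i) - hgt w c
       else 1 - hgt w c + hgt w (i - (w.length - c))) := by
    intro i hi
    by_cases h : i ≤ w.length - c
    · rw [if_pos h, hw', rotAt, hgt_append_left (by rw [hdl]; omega), hgt_drop]
    · rw [if_neg h, hw', rotAt, hgt_append_right (by rw [hdl]; omega), sdh_drop, hw, hdl]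
      have h3 : i - (w.length - c) ≤ c := by omega
      rw [hgt_take h3]
      try ring
  have hvc : 0 ≤ hgt w c := hpos c hc2
  have hval : hgt w' (w.length - 1 - c) = - hgt w c := by
    rw [hgt' (w.length - 1 - c) (by omega),
      if_pos (by omega : w.length - 1 - c ≤ w.length - c)]
    have h4 : c + (w.length - 1 - c) = w.length - 1 := by omega
    rw [h4, hlast]
    ring
  have hmin : minH w' = - hgt w c := by
    apply _root_.le_antisymm
    · calc minH w' ≤ hgt w' (w.length - 1 - c) := minH_le (by rw [hlen']; omega)
        _ = - hgt w c := hval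
    · apply Finset.le_inf'
      intro i hi
      rw [Finset.mem_range, hlen'] at hi
      rw [hgt' i (by omega)]
      split_ifs with h
      · have := hpos (c+i) (by omega)
        linarith
      · have := hpos (i - (w.length - c)) (by omega)
        linarith
  have harg : argmin w' = w.length - 1 - c := by
    apply _root_.le_antisymm
    · apply argmin_le'
      intro i hi he
      rw [hlen'] at hi
      by_contra hgt_i
      push_neg at hgt_i
      rw [hgt' i hi, hmin] at he
      split_ifs at he with h
      · have h5 : c + i = w.length := by omega
        rw [h5, hgt_length, hw] at he
        linarith
      · have := hpos (i - (w.length - c)) (by omega)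
        linarith
    · have h7 : w.length - 1 - c ≤ w'.length := by rw [hlen']; omega
      have h8 : hgt w' (w.length - 1 - c) = minH w' := by rw [hval, hmin]
      exact argmin_max h7 h8
  rw [canon, harg]
  have h6 : w.length - 1 - c + 1 = w.length - c := by omega
  rw [h6, hw', rotAt, rotAt, ← hdl, List.drop_left, List.take_left, List.take_append_drop]

lemma sdh_up : sdh [Step.up] = 1 := by simp [sdh, dh]

lemma pathLen_up : pathLen [Step.up] = 1 := by simp [pathLen, len]

lemma pathWt_canon_eq {R : Type*} [CommRing R] (a b : ℕ → R) {w : List Step}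
    (hw : sdh w = 1) : pathWt a b w = pathWt a b ((canon w).dropLast) := by
  have h1 : pathWt a b (canon w) = pathWt a b w := by
    rw [canon, pathWt_rotAt]
  rw [← h1, canon_concat hw, ← dropLast_canon hw]
  rw [pathWt_append]
  simp [pathWt, wt]

end CF

/-- Chung-Feller theorem of Dyck type for Class 1 (Theorem 3.4): for `0 ≤ m ≤ n`, the
total weight of pointed paths from `(0,0)` to the line `y = 1` with total length
`n+1`, last step of length `≥ 1`, mark `j` less than the length of the last step, and
non-positive pointed length `\bar l(L) + j = m`, equals the total weight of
nonnegative paths of length `n`. -/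
theorem class1_chung_feller_dyck_type {R : Type*} [CommRing R] (A B : Finset ℕ)
    (hA : ∀ i ∈ A, 0 < i) (hB : ∀ i ∈ B, 0 < i) (a b : ℕ → R)
    (n m : ℕ) (hm : m ≤ n) :
    (∑ᶠ p ∈ {p : List Step × ℕ | (∀ s ∈ p.1, Valid A B s) ∧ (p.1.map dh).sum = 1 ∧
        pathLen p.1 = n + 1 ∧
        (∃ s, p.1.getLast? = some s ∧ 1 ≤ len s ∧ p.2 < len s) ∧
        npLen p.1 + p.2 = m},
      pathWt a b p.1) =
    ∑ᶠ L ∈ {L : List Step | (∀ s ∈ L, Valid A B s) ∧ Nonneg L ∧ pathLen L = n},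
      pathWt a b L := by
  classical
  apply finsum_mem_eq_of_bijOn (fun p => (CF.canon p.1).dropLast)
  · refine ⟨?_, ?_, ?_⟩
    · -- MapsTo
      rintro p ⟨hval, hsum, hlen, ⟨s, hlast, hs1, hjs⟩, hstat⟩
      dsimp only
      have hw1 : CF.sdh p.1 = 1 := hsum
      refine ⟨?_, CF.nonneg_dropLast_canon hw1, ?_⟩
      · intro t ht
        exact hval t (CF.mem_rotAt.1 (List.mem_of_mem_dropLast ht))
      · have h2 : pathLen (CF.canon p.1) = n + 1 := by
          rw [CF.canon, CF.pathLen_rotAt, hlen]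
        rw [CF.canon_concat hw1, ← CF.dropLast_canon hw1, CF.pathLen_append,
          CF.pathLen_up] at h2
        omega
    · -- InjOn
      rintro p ⟨hvalp, hsump, hlenp, ⟨sp, hlastp, hsp1, hjsp⟩, hstatp⟩
        q ⟨hvalq, hsumq, hlenq, ⟨sq, hlastq, hsq1, hjsq⟩, hstatq⟩ hpq
      simp only at hpq
      have hwp : CF.sdh p.1 = 1 := hsump
      have hwq : CF.sdh q.1 = 1 := hsumq
      obtain ⟨kp, hkp, hrotp⟩ := CF.rot_canon hwp
      obtain ⟨kq, hkq, hrotq⟩ := CF.rot_canon hwq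
      have hcc : CF.canon p.1 = CF.canon q.1 := by
        rw [CF.canon_concat hwp, CF.canon_concat hwq, ← CF.dropLast_canon hwp,
          ← CF.dropLast_canon hwq, hpq]
      set w := CF.canon p.1 with hwdef
      have hlw : w.length = p.1.length := by
        rw [hwdef, CF.canon]; exact CF.length_rotAt _ _
      have hlwq : w.length = q.1.length := by
        rw [hcc, CF.canon]; exact CF.length_rotAt _ _
      have hsw : CF.sdh w = 1 := by
        rw [hwdef, CF.canon, CF.sdh_rotAt]; exact hsump
      have hrotq' : CF.rotAt (kq+1) w = q.1 := by rw [hcc]; exact hrotq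
      have hlast2p : p.1.getLast? = some (CF.elt w kp) := by
        rw [← hrotp]; exact CF.getLast?_rotAt (by omega)
      have hlast2q : q.1.getLast? = some (CF.elt w kq) := by
        rw [← hrotq']; exact CF.getLast?_rotAt (by omega)
      rw [hlastp] at hlast2p
      rw [hlastq] at hlast2q
      have hjp : p.2 < len (CF.elt w kp) := by
        rw [← Option.some_inj.1 hlast2p]; exact hjsp
      have hjq : q.2 < len (CF.elt w kq) := by
        rw [← Option.some_inj.1 hlast2q]; exact hjsq
      have hphip : npLen (CF.rotAt (kp+1) w) + p.2 = m := by rw [hrotp]; exact hstatp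
      have hphiq : npLen (CF.rotAt (kq+1) w) + q.2 = m := by rw [hrotq']; exact hstatq
      obtain ⟨h1, h2⟩ := CF.phi_inj hsw (by omega) (by omega) hjp hjq
        (hphip.trans hphiq.symm)
      have h3 : p.1 = q.1 := by rw [← hrotp, ← hrotq', h1]
      exact Prod.ext h3 h2
    · -- SurjOn
      rintro P ⟨hvalP, hnn, hlenP⟩
      rw [CF.nonneg_iff] at hnn
      obtain ⟨hsP, hposP⟩ := hnn
      set w := P ++ [Step.up] with hwdef
      have hlw : w.length = P.length + 1 := by rw [hwdef]; simp
      have hsw : CF.sdh w = 1 := by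
        rw [hwdef, CF.sdh_append, hsP, CF.sdh_up]
        norm_num
      have hplw : pathLen w = n + 1 := by
        rw [hwdef, CF.pathLen_append, hlenP, CF.pathLen_up]
      obtain ⟨k, hk, j, hj, hphi⟩ := CF.cut_exists hsw (show m < pathLen w by omega)
      have hpos : ∀ i, i ≤ w.length → 0 ≤ CF.hgt w i := by
        intro i hi
        by_cases h : i ≤ P.length
        · rw [hwdef, CF.hgt_append_left h]
          exact hposP i h
        · rw [CF.hgt_of_le w (by omega), hsw]
          norm_num
      have hlastw : CF.hgt w (w.length - 1) = 0 := by
        have h1 : w.length - 1 = P.length := by omega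
        rw [h1, hwdef, CF.hgt_append_left (le_refl _), CF.hgt_length, hsP]
      refine ⟨(CF.rotAt (k+1) w, j), ⟨?_, ?_, ?_, ?_, ?_⟩, ?_⟩
      · intro t ht
        rcases List.mem_append.1 (CF.mem_rotAt.1 ht) with h | h
        · exact hvalP t h
        · have : t = Step.up := by simpa using h
          rw [this]; trivial
      · show CF.sdh _ = 1
        rw [CF.sdh_rotAt]; exact hsw
      · show pathLen _ = n + 1
        rw [CF.pathLen_rotAt]; exact hplw
      · exact ⟨CF.elt w k, CF.getLast?_rotAt hk, by omega, hj⟩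
      · exact hphi
      · show (CF.canon (CF.rotAt (k+1) w)).dropLast = P
        rw [CF.canon_rotAt hsw hpos hlastw (by omega) (by omega) (by omega), hwdef,
          List.dropLast_concat]
  · -- weights
    rintro p ⟨hval, hsum, _⟩
    exact CF.pathWt_canon_eq a b hsum
end

section
/- Let F(z) be a formal power series with F(z) = 1 + B(z)F(z) + A(z)F(z)^2 where A(z), B(z) are polynomials with zero constant term, and suppose y·F(yz) ≡ F(z) mod (y−1) (automatic). Then the series M(y,z) := P(y,z)·F(yz) / (1 − Ã(y,z)·F(yz)·F(z)) equals (y·F(yz) − F(z))/(y−1), where, writing A(z) = Σ_{i∈A} a_i z^i, we set Ã(y,z) = Σ_{i∈A} a_i y^{i-1} z^i and P(y,z) = 1 + Σ_{i∈B} b_i z^i (1+⋯+y^{i-1}) F(z) + Σ_{i∈A} a_i z^i (1+⋯+y^{i-2}) F(z)^2 with B(z) = Σ_{i∈B} b_i z^i. -/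
open PowerSeries Polynomial

set_option maxRecDepth 8000


/-- The algebraic core of the Motzkin-type Chung-Feller theorem (Class 1).
Let `F` satisfy `F = 1 + B(z)F + A(z)F²` with `A(z) = Σ_{i∈A} a_i z^i`,
`B(z) = Σ_{i∈B} b_i z^i` having zero constant term. With
`Ã(y,z) = Σ_{i∈A} a_i y^{i-1} z^i` and
`P(y,z) = 1 + Σ_{i∈B} b_i z^i(1+⋯+y^{i-1})F(z) + Σ_{i∈A} a_i z^i(1+⋯+y^{i-2})F(z)²`,
the series `M(y,z) = P(y,z)·F(yz)/(1 − Ã(y,z)·F(yz)·F(z))` equals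
`(y·F(yz) − F(z))/(y−1) = Σ_n f_n z^n(1+y+⋯+y^n)`. -/
theorem motzkin_type_algebraic_core {R : Type*} [CommRing R] (A B : Finset ℕ)
    (hA : ∀ i ∈ A, 0 < i) (hB : ∀ i ∈ B, 0 < i) (a b : ℕ → R)
    (F : PowerSeries R)
    (hF : F = 1 + (∑ i ∈ B, PowerSeries.C (b i) * PowerSeries.X ^ i) * F +
               (∑ i ∈ A, PowerSeries.C (a i) * PowerSeries.X ^ i) * F ^ 2)
    (W : PowerSeries (Polynomial R))
    (hW : W * (1 - (∑ i ∈ A, PowerSeries.C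
                      (Polynomial.C (a i) * Polynomial.X ^ (i - 1)) * PowerSeries.X ^ i) *
                   (PowerSeries.mk fun n =>
                     Polynomial.C (PowerSeries.coeff n F) * Polynomial.X ^ n) *
                   (PowerSeries.mk fun n =>
                     Polynomial.C (PowerSeries.coeff n F))) = 1) :
    (1 + (∑ i ∈ B, PowerSeries.C
            (Polynomial.C (b i) * ∑ j ∈ Finset.range i, Polynomial.X ^ j) *
            PowerSeries.X ^ i) *
          (PowerSeries.mk fun n => Polynomial.C (PowerSeries.coeff n F)) +
         (∑ i ∈ A, PowerSeries.C
            (Polynomial.C (a i) * ∑ j ∈ Finset.range (i - 1), Polynomial.X ^ j) *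
            PowerSeries.X ^ i) *
          (PowerSeries.mk fun n => Polynomial.C (PowerSeries.coeff n F)) ^ 2) *
      (PowerSeries.mk fun n =>
        Polynomial.C (PowerSeries.coeff n F) * Polynomial.X ^ n) * W =
    PowerSeries.mk fun n =>
      Polynomial.C (PowerSeries.coeff n F) * ∑ j ∈ Finset.range (n + 1), Polynomial.X ^ j := by
  classical
  set Fz : PowerSeries (Polynomial R) :=
    PowerSeries.mk fun n => Polynomial.C (PowerSeries.coeff n F) with hFzdef
  set Fyz : PowerSeries (Polynomial R) :=
    PowerSeries.mk fun n => Polynomial.C (PowerSeries.coeff n F) * Polynomial.X ^ n with hFyzdef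
  set G : PowerSeries (Polynomial R) :=
    PowerSeries.mk fun n =>
      Polynomial.C (PowerSeries.coeff n F) * ∑ j ∈ Finset.range (n + 1), Polynomial.X ^ j
    with hGdef
  set SB : PowerSeries (Polynomial R) :=
    ∑ i ∈ B, PowerSeries.C (R := Polynomial R)
       (Polynomial.C (b i) * ∑ j ∈ Finset.range i, Polynomial.X ^ j) * PowerSeries.X ^ i with hSB
  set SA : PowerSeries (Polynomial R) :=
    ∑ i ∈ A, PowerSeries.C (R := Polynomial R)
       (Polynomial.C (a i) * ∑ j ∈ Finset.range (i - 1), Polynomial.X ^ j) * PowerSeries.X ^ i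
    with hSA
  set At : PowerSeries (Polynomial R) :=
    ∑ i ∈ A, PowerSeries.C (R := Polynomial R)
       (Polynomial.C (a i) * Polynomial.X ^ (i - 1)) * PowerSeries.X ^ i with hAt
  set Bp : PowerSeries (Polynomial R) :=
    ∑ i ∈ B, PowerSeries.C (R := Polynomial R) (Polynomial.C (b i)) * PowerSeries.X ^ i with hBp
  set Ap : PowerSeries (Polynomial R) :=
    ∑ i ∈ A, PowerSeries.C (R := Polynomial R) (Polynomial.C (a i)) * PowerSeries.X ^ i with hAp
  set Bpy : PowerSeries (Polynomial R) :=
    ∑ i ∈ B, PowerSeries.C (R := Polynomial R) (Polynomial.C (b i) * Polynomial.X ^ i) *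
      PowerSeries.X ^ i with hBpy
  set Apy : PowerSeries (Polynomial R) :=
    ∑ i ∈ A, PowerSeries.C (R := Polynomial R) (Polynomial.C (a i) * Polynomial.X ^ i) *
      PowerSeries.X ^ i with hApy
  set y : PowerSeries (Polynomial R) := PowerSeries.C (R := Polynomial R) Polynomial.X with hy
  clear_value Fz Fyz G SB SA At Bp Ap Bpy Apy y
  -- Fz as a map of F
  have hFzmap : Fz = PowerSeries.map (Polynomial.C : R →+* Polynomial R) F := by
    ext n; simp [hFzdef]
  have hFz : Fz = 1 + Bp * Fz + Ap * Fz ^ 2 := by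
    rw [hFzmap]
    conv_lhs => rw [hF]
    simp only [map_add, map_mul, map_one, map_pow, map_sum, PowerSeries.map_C,
      PowerSeries.map_X]
    rw [hBp, hAp]
  -- Fyz as rescale of Fz
  have hFyzmap : Fyz = PowerSeries.rescale Polynomial.X Fz := by
    refine PowerSeries.ext fun n => ?_
    rw [hFyzdef, hFzdef, PowerSeries.coeff_rescale, PowerSeries.coeff_mk, PowerSeries.coeff_mk,
      mul_comm]
  have hresC : ∀ c : Polynomial R, PowerSeries.rescale Polynomial.X
      (PowerSeries.C (R := Polynomial R) c) = PowerSeries.C (R := Polynomial R) c := by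
    intro c
    refine PowerSeries.ext fun n => ?_
    rw [PowerSeries.coeff_rescale, PowerSeries.coeff_C]
    rcases n with _ | n
    · rw [pow_zero, one_mul]
    · rw [if_neg (Nat.succ_ne_zero n), mul_zero]
  have hresB : PowerSeries.rescale Polynomial.X Bp = Bpy := by
    rw [hBp, hBpy, map_sum]
    refine Finset.sum_congr rfl fun i hi => ?_
    rw [map_mul, hresC, map_pow, PowerSeries.rescale_X, mul_pow, ← map_pow, ← mul_assoc,
      ← map_mul]
  have hresA : PowerSeries.rescale Polynomial.X Ap = Apy := by
    rw [hAp, hApy, map_sum]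
    refine Finset.sum_congr rfl fun i hi => ?_
    rw [map_mul, hresC, map_pow, PowerSeries.rescale_X, mul_pow, ← map_pow, ← mul_assoc,
      ← map_mul]
  have hFyz : Fyz = 1 + Bpy * Fyz + Apy * Fyz ^ 2 := by
    rw [hFyzmap]
    conv_lhs => rw [hFz]
    rw [map_add, map_add, map_one, map_mul, map_mul, map_pow, hresB, hresA, ← hFyzmap]
  -- key sum identities
  have e1 : (y - 1) * SB = Bpy - Bp := by
    rw [hSB, hBpy, hBp, Finset.mul_sum, ← Finset.sum_sub_distrib]
    refine Finset.sum_congr rfl fun i hi => ?_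
    rw [hy, ← mul_assoc, ← sub_mul, ← map_one (PowerSeries.C (R := Polynomial R)),
      ← map_sub, ← map_mul, ← map_sub]
    congr 2
    have := geom_sum_mul (Polynomial.X : Polynomial R) i
    linear_combination (Polynomial.C (b i)) * this
  have e2 : (y - 1) * SA = At - Ap := by
    rw [hSA, hAt, hAp, Finset.mul_sum, ← Finset.sum_sub_distrib]
    refine Finset.sum_congr rfl fun i hi => ?_
    rw [hy, ← mul_assoc, ← sub_mul, ← map_one (PowerSeries.C (R := Polynomial R)),
      ← map_sub, ← map_mul, ← map_sub]
    congr 2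
    have := geom_sum_mul (Polynomial.X : Polynomial R) (i - 1)
    linear_combination (Polynomial.C (a i)) * this
  have e3 : y * At = Apy := by
    rw [hAt, hApy, Finset.mul_sum]
    refine Finset.sum_congr rfl fun i hi => ?_
    rw [hy, ← mul_assoc, ← map_mul]
    congr 2
    rw [mul_comm Polynomial.X, mul_assoc, ← pow_succ, Nat.sub_add_cancel (hA i hi)]
  have e4 : (y - 1) * G = y * Fyz - Fz := by
    refine PowerSeries.ext fun n => ?_
    rw [sub_mul, one_mul, hy]
    simp only [map_sub, PowerSeries.coeff_C_mul, hGdef, hFyzdef, hFzdef, PowerSeries.coeff_mk]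
    have := geom_sum_mul (Polynomial.X : Polynomial R) (n + 1)
    linear_combination (Polynomial.C (PowerSeries.coeff n F)) * this
  -- reduce using W
  suffices h : (1 + SB * Fz + SA * Fz ^ 2) * Fyz = G * (1 - At * Fyz * Fz) by
    calc (1 + SB * Fz + SA * Fz ^ 2) * Fyz * W
        = G * (1 - At * Fyz * Fz) * W := by rw [h]
      _ = G := by linear_combination G * hW
  -- cancel (y - 1)
  have hreg : ∀ u v : PowerSeries (Polynomial R), (y - 1) * u = (y - 1) * v → u = v := by
    intro u v huv
    refine PowerSeries.ext fun n => ?_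
    have h2 := congrArg (PowerSeries.coeff (R := Polynomial R) n) huv
    rw [hy, ← map_one (PowerSeries.C (R := Polynomial R)), ← map_sub] at h2
    simp only [PowerSeries.coeff_C_mul] at h2
    have hm : (Polynomial.X - 1 : Polynomial R).Monic := by
      simpa using Polynomial.monic_X_sub_C (1 : R)
    exact hm.isRegular.left h2
  apply hreg
  linear_combination (Fz * Fyz) * e1 + (Fz ^ 2 * Fyz) * e2 + (Fyz ^ 2 * Fz) * e3 +
    (At * Fyz * Fz - 1) * e4 + Fyz * hFz - Fz * hFyz
end
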